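/- arXiv:2107.07103 — 6 statements merged into one kernel-verified Lean document; each statement's English description precedes it below -/
import Mathlib

section
/- Let F be the multilinear extension of a k-submodular function f. Then the Hessian of F is element-wise non-positive off the diagonal blocks: ∂²F/(∂x_{i₁,j₁} ∂x_{i₂,j₂}) = 0 if i₁ = i₂, and ∂²F/(∂x_{i₁,j₁} ∂x_{i₂,j₂}) ≤ 0 if i₁ ≠ i₂, for all i₁, i₂ ∈ [n] and j₁, j₂ ∈ [k]. -/
open Finset

def kmeet {V : Type*} {k : ℕ} (S T : V → Option (Fin k)) : V → Option (Fin k) :=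
  fun e => if S e = T e then S e else none

def kjoin {V : Type*} {k : ℕ} (S T : V → Option (Fin k)) : V → Option (Fin k) :=
  fun e => match S e, T e with
  | none, t => t
  | some i, none => some i
  | some i, some j => if i = j then some i else none

def KSubmodular {V : Type*} {k : ℕ} (f : (V → Option (Fin k)) → ℝ) : Prop :=
  ∀ S T, f (kmeet S T) + f (kjoin S T) ≤ f S + f T

/-- The multilinear extension of a `k`-submodular function on ground set `Fin n`. -/
def mlext {n k : ℕ} (f : (Fin n → Option (Fin k)) → ℝ) (x : Fin n → Fin k → ℝ) : ℝ :=
  ∑ S : Fin n → Option (Fin k), f S *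
    ∏ i, (S i).elim (1 - ∑ j, x i j) (fun j => x i j)

/-- Update the coordinate `(i,j)` of `x` to the value `t`. -/
def upd {n k : ℕ} (x : Fin n → Fin k → ℝ) (i : Fin n) (j : Fin k) (t : ℝ) :
    Fin n → Fin k → ℝ :=
  fun i' j' => if i' = i ∧ j' = j then t else x i' j'

/-- The partial derivative `∂F/∂x_{i,j}` of the multilinear extension at `x`. -/
noncomputable def pderivF {n k : ℕ} (f : (Fin n → Option (Fin k)) → ℝ)
    (i : Fin n) (j : Fin k) (x : Fin n → Fin k → ℝ) : ℝ :=
  deriv (fun t => mlext f (upd x i j t)) (x i j)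

/-- Membership in the polytope `P = {x ∈ [0,1]^{n×k} : ∑_j x_{i,j} ≤ 1 ∀ i}`. -/
def inP {n k : ℕ} (x : Fin n → Fin k → ℝ) : Prop :=
  (∀ i j, 0 ≤ x i j ∧ x i j ≤ 1) ∧ ∀ i, ∑ j, x i j ≤ 1

namespace MLAux

variable {n k : ℕ}

/-- The factor of the product corresponding to ground element `i`. -/
def wfac (x : Fin n → Fin k → ℝ) (S : Fin n → Option (Fin k)) (i : Fin n) : ℝ :=
  (S i).elim (1 - ∑ j, x i j) (fun j => x i j)

/-- Coefficient of `t` in `wfac (upd x i j t) S i`. -/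
def coef (a : Option (Fin k)) (j : Fin k) : ℝ :=
  a.elim (-1) (fun j' => if j' = j then 1 else 0)

/-- Constant term of `wfac (upd x i j t) S i`. -/
def dco (x : Fin n → Fin k → ℝ) (i : Fin n) (j : Fin k) (a : Option (Fin k)) : ℝ :=
  a.elim (1 - ∑ j' ∈ univ.erase j, x i j') (fun j' => if j' = j then 0 else x i j')

lemma upd_apply_ne (x : Fin n → Fin k → ℝ) (i : Fin n) (j : Fin k) (t : ℝ)
    {i' : Fin n} (h : i' ≠ i) (j' : Fin k) : upd x i j t i' j' = x i' j' := by
  simp [upd, h]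

lemma wfac_upd_ne (x : Fin n → Fin k → ℝ) (i : Fin n) (j : Fin k) (t : ℝ)
    (S : Fin n → Option (Fin k)) {i' : Fin n} (h : i' ≠ i) :
    wfac (upd x i j t) S i' = wfac x S i' := by
  unfold wfac
  cases S i' with
  | none => simp [upd_apply_ne x i j t h]
  | some j' => simp [upd_apply_ne x i j t h]

lemma wfac_upd_self (x : Fin n → Fin k → ℝ) (i : Fin n) (j : Fin k) (t : ℝ)
    (S : Fin n → Option (Fin k)) :
    wfac (upd x i j t) S i = coef (S i) j * t + dco x i j (S i) := by
  unfold wfac coef dco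
  cases S i with
  | none =>
    simp only [Option.elim]
    have : ∑ j', upd x i j t i j' = t + ∑ j' ∈ univ.erase j, x i j' := by
      rw [← Finset.add_sum_erase _ _ (mem_univ j)]
      congr 1
      · simp [upd]
      · exact Finset.sum_congr rfl fun j' hj' => by
          simp [upd, (Finset.mem_erase.mp hj').1]
    rw [this]; ring
  | some j' =>
    simp only [Option.elim]
    by_cases h : j' = j
    · subst h; simp [upd]
    · simp [upd, h]

lemma wfac_congr (x : Fin n → Fin k → ℝ) {S T : Fin n → Option (Fin k)} {i : Fin n}
    (h : S i = T i) : wfac x S i = wfac x T i := by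
  unfold wfac; rw [h]

lemma wfac_nonneg (x : Fin n → Fin k → ℝ) (hx : inP x)
    (S : Fin n → Option (Fin k)) (i : Fin n) : 0 ≤ wfac x S i := by
  unfold wfac
  cases S i with
  | none => simpa using (hx.2 i)
  | some j => exact (hx.1 i j).1

/-- The multilinear extension restricted to one coordinate is affine. -/
lemma mlext_upd_eq (f : (Fin n → Option (Fin k)) → ℝ) (x : Fin n → Fin k → ℝ)
    (i : Fin n) (j : Fin k) (t : ℝ) :
    mlext f (upd x i j t) =
      (∑ S : Fin n → Option (Fin k),
          f S * (coef (S i) j * ∏ i' ∈ univ.erase i, wfac x S i')) * t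
      + ∑ S : Fin n → Option (Fin k),
          f S * (dco x i j (S i) * ∏ i' ∈ univ.erase i, wfac x S i') := by
  unfold mlext
  rw [Finset.sum_mul, ← Finset.sum_add_distrib]
  refine Finset.sum_congr rfl fun S _ => ?_
  have hprod : (∏ i', (S i').elim (1 - ∑ j', upd x i j t i' j') (fun j' => upd x i j t i' j'))
      = ∏ i', wfac (upd x i j t) S i' := rfl
  rw [hprod, ← Finset.mul_prod_erase _ _ (mem_univ i), wfac_upd_self,
    Finset.prod_congr rfl (fun i' hi' => wfac_upd_ne x i j t S (Finset.mem_erase.mp hi').1)]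
  ring

lemma deriv_affine (A B t₀ : ℝ) : deriv (fun t => A * t + B) t₀ = A := by
  simpa using (((hasDerivAt_id t₀).const_mul A).add_const B).deriv

lemma pderivF_eq (f : (Fin n → Option (Fin k)) → ℝ) (i : Fin n) (j : Fin k)
    (x : Fin n → Fin k → ℝ) :
    pderivF f i j x = ∑ S : Fin n → Option (Fin k),
      f S * (coef (S i) j * ∏ i' ∈ univ.erase i, wfac x S i') := by
  unfold pderivF
  have : (fun t => mlext f (upd x i j t)) =
      fun t => (∑ S : Fin n → Option (Fin k),
          f S * (coef (S i) j * ∏ i' ∈ univ.erase i, wfac x S i')) * t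
        + ∑ S : Fin n → Option (Fin k),
          f S * (dco x i j (S i) * ∏ i' ∈ univ.erase i, wfac x S i') :=
    funext fun t => mlext_upd_eq f x i j t
  rw [this, deriv_affine]

lemma sum_coef_mul (j : Fin k) (h : Option (Fin k) → ℝ) :
    ∑ a : Option (Fin k), coef a j * h a = h (some j) - h none := by
  rw [Fintype.sum_option]
  have : ∀ a : Fin k, coef (some a) j * h (some a)
      = if a = j then h (some a) else 0 := by
    intro a
    unfold coef
    simp only [Option.elim]
    split_ifs <;> simp
  rw [Finset.sum_congr rfl fun a _ => this a, Finset.sum_ite_eq' univ j (fun a => h (some a))]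
  have hc : coef (none : Option (Fin k)) j = -1 := rfl
  rw [hc]
  simp
  ring

section Split

variable (i₁ i₂ : Fin n)

/-- Reconstruct a labeling from its values off `{i₁, i₂}` and at `i₁`, `i₂`. -/
def recon (z : ({i : Fin n // i ≠ i₁ ∧ i ≠ i₂} → Option (Fin k)) ×
    Option (Fin k) × Option (Fin k)) : Fin n → Option (Fin k) :=
  fun i => if h1 : i = i₁ then z.2.1 else if h2 : i = i₂ then z.2.2 else z.1 ⟨i, h1, h2⟩

lemma recon_i₁ (z) : recon (k := k) i₁ i₂ z i₁ = z.2.1 := by simp [recon]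

lemma recon_i₂ (hne : i₁ ≠ i₂) (z) : recon (k := k) i₁ i₂ z i₂ = z.2.2 := by
  simp [recon, hne.symm]

lemma recon_off (z) {i : Fin n} (h1 : i ≠ i₁) (h2 : i ≠ i₂) :
    recon (k := k) i₁ i₂ z i = z.1 ⟨i, h1, h2⟩ := by
  simp [recon, h1, h2]

/-- The splitting equivalence. -/
def splitE (hne : i₁ ≠ i₂) : (Fin n → Option (Fin k)) ≃
    (({i : Fin n // i ≠ i₁ ∧ i ≠ i₂} → Option (Fin k)) × Option (Fin k) × Option (Fin k)) where
  toFun S := (fun p => S p.1, S i₁, S i₂)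
  invFun := recon i₁ i₂
  left_inv S := by
    funext i
    unfold recon
    split_ifs with h1 h2
    · rw [h1]
    · rw [h2]
    · rfl
  right_inv z := by
    refine Prod.ext (funext fun p => ?_) (Prod.ext ?_ ?_)
    · exact recon_off i₁ i₂ z p.2.1 p.2.2
    · exact recon_i₁ i₁ i₂ z
    · exact recon_i₂ i₁ i₂ hne z

end Split

end MLAux

open MLAux in
theorem mlext_hessian_elementwise_nonpos {n k : ℕ}
    (f : (Fin n → Option (Fin k)) → ℝ) (hf : KSubmodular f)
    (i₁ i₂ : Fin n) (j₁ j₂ : Fin k) (x : Fin n → Fin k → ℝ) (hx : inP x) :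
    (i₁ = i₂ → deriv (fun t => pderivF f i₁ j₁ (upd x i₂ j₂ t)) (x i₂ j₂) = 0) ∧
    (i₁ ≠ i₂ → deriv (fun t => pderivF f i₁ j₁ (upd x i₂ j₂ t)) (x i₂ j₂) ≤ 0) := by
  constructor
  · -- diagonal case
    rintro rfl
    have hconst : (fun t => pderivF f i₁ j₁ (upd x i₁ j₂ t)) =
        fun _ => ∑ S : Fin n → Option (Fin k),
          f S * (coef (S i₁) j₁ * ∏ i' ∈ univ.erase i₁, wfac x S i') := by
      funext t
      rw [pderivF_eq]
      refine Finset.sum_congr rfl fun S _ => ?_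
      congr 1
      congr 1
      exact Finset.prod_congr rfl fun i' hi' =>
        wfac_upd_ne x i₁ j₂ t S (Finset.mem_erase.mp hi').1
    rw [hconst, deriv_const]
  · -- off-diagonal case
    intro hne
    set Q : (Fin n → Option (Fin k)) → ℝ :=
      fun S => ∏ i' ∈ (univ.erase i₁).erase i₂, wfac x S i' with hQ
    have hi₂mem : i₂ ∈ univ.erase i₁ := Finset.mem_erase.mpr ⟨hne.symm, mem_univ i₂⟩
    set D : ℝ := ∑ S : Fin n → Option (Fin k),
      f S * (coef (S i₁) j₁ * (coef (S i₂) j₂ * Q S)) with hD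
    -- the inner partial derivative is affine in t, with slope D
    have haff : ∀ t, pderivF f i₁ j₁ (upd x i₂ j₂ t) =
        D * t + ∑ S : Fin n → Option (Fin k),
          f S * (coef (S i₁) j₁ * (dco x i₂ j₂ (S i₂) * Q S)) := by
      intro t
      rw [pderivF_eq, hD, Finset.sum_mul, ← Finset.sum_add_distrib]
      refine Finset.sum_congr rfl fun S _ => ?_
      have hsplit : (∏ i' ∈ univ.erase i₁, wfac (upd x i₂ j₂ t) S i') =
          wfac (upd x i₂ j₂ t) S i₂ * Q S := by
        rw [← Finset.mul_prod_erase _ _ hi₂mem, hQ]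
        congr 1
        exact Finset.prod_congr rfl fun i' hi' =>
          wfac_upd_ne x i₂ j₂ t S (Finset.mem_erase.mp hi').1
      rw [hsplit, wfac_upd_self]
      ring
    have hderiv : deriv (fun t => pderivF f i₁ j₁ (upd x i₂ j₂ t)) (x i₂ j₂) = D := by
      rw [funext haff, deriv_affine]
    rw [hderiv]
    -- now show D ≤ 0 using k-submodularity
    have hQnn : ∀ S, 0 ≤ Q S := fun S =>
      Finset.prod_nonneg fun i' _ => wfac_nonneg x hx S i'
    have hQcongr : ∀ S T : Fin n → Option (Fin k),
        (∀ i, i ≠ i₁ → i ≠ i₂ → S i = T i) → Q S = Q T := by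
      intro S T h
      exact Finset.prod_congr rfl fun i' hi' => by
        have h2 := Finset.mem_erase.mp hi'
        have h1 := Finset.mem_erase.mp h2.2
        exact wfac_congr x (h i' h1.1 h2.1)
    -- reindex the sum via the splitting equivalence
    have hre : D = ∑ z : (({i : Fin n // i ≠ i₁ ∧ i ≠ i₂} → Option (Fin k)) ×
        Option (Fin k) × Option (Fin k)),
        f (recon i₁ i₂ z) * (coef (recon i₁ i₂ z i₁) j₁ *
          (coef (recon i₁ i₂ z i₂) j₂ * Q (recon i₁ i₂ z))) := by
      rw [hD]
      exact (Equiv.sum_comp (splitE i₁ i₂ hne).symm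
        (fun S => f S * (coef (S i₁) j₁ * (coef (S i₂) j₂ * Q S)))).symm
    rw [hre, Fintype.sum_prod_type]
    apply Finset.sum_nonpos
    intro r _
    rw [Fintype.sum_prod_type]
    -- for fixed r, the `Q` value is the same for all (a, b)
    have hQr : ∀ a b, Q (recon i₁ i₂ (r, a, b)) = Q (recon i₁ i₂ (r, none, none)) := by
      intro a b
      apply hQcongr
      intro i h1 h2
      rw [recon_off i₁ i₂ _ h1 h2, recon_off i₁ i₂ _ h1 h2]
    set Qr : ℝ := Q (recon i₁ i₂ (r, none, none)) with hQrdef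
    have key : (∑ a : Option (Fin k), ∑ b : Option (Fin k),
        f (recon i₁ i₂ (r, a, b)) * (coef (recon i₁ i₂ (r, a, b) i₁) j₁ *
          (coef (recon i₁ i₂ (r, a, b) i₂) j₂ * Q (recon i₁ i₂ (r, a, b)))))
        = (∑ a : Option (Fin k), coef a j₁ *
            ∑ b : Option (Fin k), coef b j₂ * f (recon i₁ i₂ (r, a, b))) * Qr := by
      rw [Finset.sum_mul]
      refine Finset.sum_congr rfl fun a _ => ?_
      rw [Finset.mul_sum, Finset.sum_mul]
      refine Finset.sum_congr rfl fun b _ => ?_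
      have e1 : recon (k := k) i₁ i₂ (r, a, b) i₁ = a := recon_i₁ i₁ i₂ (r, a, b)
      have e2 : recon (k := k) i₁ i₂ (r, a, b) i₂ = b := recon_i₂ i₁ i₂ hne (r, a, b)
      rw [e1, e2, hQr a b]
      ring
    rw [key]
    have hsum : (∑ a : Option (Fin k), coef a j₁ *
        ∑ b : Option (Fin k), coef b j₂ * f (recon i₁ i₂ (r, a, b))) =
        (f (recon i₁ i₂ (r, some j₁, some j₂)) - f (recon i₁ i₂ (r, some j₁, none)))
        - (f (recon i₁ i₂ (r, none, some j₂)) - f (recon i₁ i₂ (r, none, none))) := by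
      rw [sum_coef_mul j₁ (fun a => ∑ b : Option (Fin k), coef b j₂ * f (recon i₁ i₂ (r, a, b)))]
      rw [sum_coef_mul j₂ (fun b => f (recon i₁ i₂ (r, some j₁, b))),
        sum_coef_mul j₂ (fun b => f (recon i₁ i₂ (r, none, b)))]
    rw [hsum]
    -- k-submodularity gives the sign
    have hmeet : kmeet (recon i₁ i₂ (r, some j₁, none)) (recon i₁ i₂ (r, none, some j₂))
        = recon (k := k) i₁ i₂ (r, none, none) := by
      funext i
      unfold kmeet
      by_cases h1 : i = i₁
      · rw [h1]
        rw [recon_i₁ i₁ i₂ (r, some j₁, none), recon_i₁ i₁ i₂ (r, none, some j₂),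
          recon_i₁ i₁ i₂ (r, none, none)]
        simp
      · by_cases h2 : i = i₂
        · rw [h2]
          rw [recon_i₂ i₁ i₂ hne (r, some j₁, none), recon_i₂ i₁ i₂ hne (r, none, some j₂),
            recon_i₂ i₁ i₂ hne (r, none, none)]
          simp
        · rw [recon_off i₁ i₂ _ h1 h2, recon_off i₁ i₂ _ h1 h2, recon_off i₁ i₂ _ h1 h2]
          simp
    have hjoin : kjoin (recon i₁ i₂ (r, some j₁, none)) (recon i₁ i₂ (r, none, some j₂))
        = recon (k := k) i₁ i₂ (r, some j₁, some j₂) := by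
      funext i
      unfold kjoin
      by_cases h1 : i = i₁
      · rw [h1]
        rw [recon_i₁ i₁ i₂ (r, some j₁, none), recon_i₁ i₁ i₂ (r, none, some j₂),
          recon_i₁ i₁ i₂ (r, some j₁, some j₂)]
      · by_cases h2 : i = i₂
        · rw [h2]
          rw [recon_i₂ i₁ i₂ hne (r, some j₁, none), recon_i₂ i₁ i₂ hne (r, none, some j₂),
            recon_i₂ i₁ i₂ hne (r, some j₁, some j₂)]
        · rw [recon_off i₁ i₂ _ h1 h2, recon_off i₁ i₂ _ h1 h2, recon_off i₁ i₂ _ h1 h2]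
          rcases hr : r ⟨i, h1, h2⟩ with _ | v <;> simp [hr]
    have hsub := hf (recon i₁ i₂ (r, some j₁, none)) (recon i₁ i₂ (r, none, some j₂))
    rw [hmeet, hjoin] at hsub
    have hnonpos : (f (recon i₁ i₂ (r, some j₁, some j₂)) - f (recon i₁ i₂ (r, some j₁, none)))
        - (f (recon i₁ i₂ (r, none, some j₂)) - f (recon i₁ i₂ (r, none, none))) ≤ 0 := by
      linarith
    exact mul_nonpos_of_nonpos_of_nonneg hnonpos (hQnn _)
end

section
/- The multilinear extension F of a k-submodular function f is concave along any line of non-negative direction: for any x in the polytope P and any direction vector d ≥ 0 (componentwise), the function t ↦ F(x + t·d) is concave on the interval where x + t·d ∈ P. -/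
open Finset

/-! ### Auxiliary material -/

open Polynomial in
lemma derivative_finset_prod' {ι : Type*} [DecidableEq ι] (s : Finset ι) (F : ι → Polynomial ℝ) :
    derivative (∏ i ∈ s, F i) = ∑ i ∈ s, (∏ j ∈ s.erase i, F j) * derivative (F i) := by
  classical
  induction s using Finset.induction with
  | empty => simp
  | @insert a s ha ih =>
    rw [Finset.prod_insert ha, Polynomial.derivative_mul, ih, Finset.sum_insert ha,
      Finset.erase_insert ha, Finset.mul_sum]
    rw [mul_comm (derivative (F a))]
    congr 1
    refine Finset.sum_congr rfl fun i hi => ?_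
    rw [Finset.erase_insert_of_ne (by rintro rfl; exact ha hi),
      Finset.prod_insert (fun h => ha (Finset.mem_of_mem_erase h)), mul_assoc]

section Aux

variable {n k : ℕ}

lemma upd2_apply (R : Fin n → Option (Fin k)) (i1 i2 e : Fin n) (v1 v2 : Option (Fin k)) :
    Function.update (Function.update R i1 v1) i2 v2 e
      = if e = i2 then v2 else if e = i1 then v1 else R e := by
  simp [Function.update_apply]

def Av (x : Fin n → Fin k → ℝ) (i : Fin n) (v : Option (Fin k)) : ℝ :=
  v.elim (1 - ∑ j, x i j) (fun j => x i j)

def Bv (d : Fin n → Fin k → ℝ) (i : Fin n) (v : Option (Fin k)) : ℝ :=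
  v.elim (-(∑ j, d i j)) (fun j => d i j)

open Polynomial in
noncomputable def Qp (f : (Fin n → Option (Fin k)) → ℝ) (x d : Fin n → Fin k → ℝ) :
    Polynomial ℝ :=
  ∑ S : Fin n → Option (Fin k), C (f S) * ∏ i, (C (Av x i (S i)) + C (Bv d i (S i)) * X)

lemma weight_eq (x d : Fin n → Fin k → ℝ) (t : ℝ) (i : Fin n) (v : Option (Fin k)) :
    v.elim (1 - ∑ j, (x i j + t * d i j)) (fun j => x i j + t * d i j)
      = Av x i v + Bv d i v * t := by
  cases v with
  | none => simp [Av, Bv, Finset.sum_add_distrib, ← Finset.mul_sum]; ring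
  | some j => simp [Av, Bv]; ring

lemma eval_Qp (f : (Fin n → Option (Fin k)) → ℝ) (x d : Fin n → Fin k → ℝ) (t : ℝ) :
    (Qp f x d).eval t = mlext f (fun i j => x i j + t * d i j) := by
  unfold Qp mlext
  rw [Polynomial.eval_finset_sum]
  refine Finset.sum_congr rfl fun S _ => ?_
  rw [Polynomial.eval_mul, Polynomial.eval_C, Polynomial.eval_prod]
  congr 1
  refine Finset.prod_congr rfl fun i _ => ?_
  simp [weight_eq x d t i (S i)]

open Polynomial in
lemma deriv2_Qp_eval (f : (Fin n → Option (Fin k)) → ℝ) (x d : Fin n → Fin k → ℝ) (t : ℝ) :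
    (derivative (derivative (Qp f x d))).eval t
      = ∑ i1 : Fin n, ∑ i2 ∈ univ.erase i1, ∑ S : Fin n → Option (Fin k),
          f S * (Bv d i1 (S i1) * Bv d i2 (S i2) *
            ∏ i ∈ (univ.erase i1).erase i2, (Av x i (S i) + Bv d i (S i) * t)) := by
  have hfac : ∀ (i : Fin n) (S : Fin n → Option (Fin k)),
      derivative (C (Av x i (S i)) + C (Bv d i (S i)) * X) = C (Bv d i (S i)) := by
    intro i S; simp
  have h1 : derivative (Qp f x d) = ∑ S : Fin n → Option (Fin k), C (f S) *
      ∑ i1 : Fin n, (∏ i ∈ univ.erase i1, (C (Av x i (S i)) + C (Bv d i (S i)) * X)) *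
        C (Bv d i1 (S i1)) := by
    unfold Qp
    rw [derivative_sum]
    refine Finset.sum_congr rfl fun S _ => ?_
    rw [derivative_mul, derivative_C, zero_mul, zero_add, derivative_finset_prod']
    congr 1
    exact Finset.sum_congr rfl fun i _ => by rw [hfac]
  have h2 : derivative (derivative (Qp f x d)) = ∑ S : Fin n → Option (Fin k), C (f S) *
      ∑ i1 : Fin n, ∑ i2 ∈ univ.erase i1,
        ((∏ i ∈ (univ.erase i1).erase i2, (C (Av x i (S i)) + C (Bv d i (S i)) * X)) *
          C (Bv d i2 (S i2))) * C (Bv d i1 (S i1)) := by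
    rw [h1, derivative_sum]
    refine Finset.sum_congr rfl fun S _ => ?_
    rw [derivative_mul, derivative_C, zero_mul, zero_add, derivative_sum]
    congr 1
    refine Finset.sum_congr rfl fun i1 _ => ?_
    rw [derivative_mul, derivative_C, mul_zero, add_zero, derivative_finset_prod',
      Finset.sum_mul]
    refine Finset.sum_congr rfl fun i2 _ => ?_
    rw [hfac]
  rw [h2, Polynomial.eval_finset_sum]
  have h3 : ∀ S : Fin n → Option (Fin k),
      (C (f S) * ∑ i1 : Fin n, ∑ i2 ∈ univ.erase i1,
        ((∏ i ∈ (univ.erase i1).erase i2, (C (Av x i (S i)) + C (Bv d i (S i)) * X)) *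
          C (Bv d i2 (S i2))) * C (Bv d i1 (S i1))).eval t
      = ∑ i1 : Fin n, ∑ i2 ∈ univ.erase i1,
          f S * (Bv d i1 (S i1) * Bv d i2 (S i2) *
            ∏ i ∈ (univ.erase i1).erase i2, (Av x i (S i) + Bv d i (S i) * t)) := by
    intro S
    rw [Polynomial.eval_mul, Polynomial.eval_C, Polynomial.eval_finset_sum, Finset.mul_sum]
    refine Finset.sum_congr rfl fun i1 _ => ?_
    rw [Polynomial.eval_finset_sum, Finset.mul_sum]
    refine Finset.sum_congr rfl fun i2 _ => ?_
    rw [Polynomial.eval_mul, Polynomial.eval_mul, Polynomial.eval_C, Polynomial.eval_C,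
      Polynomial.eval_prod]
    simp only [Polynomial.eval_add, Polynomial.eval_mul, Polynomial.eval_C, Polynomial.eval_X]
    ring
  rw [Finset.sum_congr rfl fun S _ => h3 S]
  rw [Finset.sum_comm]
  exact Finset.sum_congr rfl fun i1 _ => Finset.sum_comm

lemma sum_pi_split [DecidableEq (Fin n → Option (Fin k))] (i1 i2 : Fin n) (h12 : i1 ≠ i2)
    (h : (Fin n → Option (Fin k)) → ℝ) :
    ∑ S : Fin n → Option (Fin k), h S
      = ∑ R ∈ univ.filter (fun R : Fin n → Option (Fin k) => R i1 = none ∧ R i2 = none),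
          ∑ v1 : Option (Fin k), ∑ v2 : Option (Fin k),
            h (Function.update (Function.update R i1 v1) i2 v2) := by
  classical
  have : ∑ R ∈ univ.filter (fun R : Fin n → Option (Fin k) => R i1 = none ∧ R i2 = none),
          ∑ v1 : Option (Fin k), ∑ v2 : Option (Fin k),
            h (Function.update (Function.update R i1 v1) i2 v2)
      = ∑ p ∈ (univ.filter (fun R : Fin n → Option (Fin k) => R i1 = none ∧ R i2 = none))
            ×ˢ ((univ : Finset (Option (Fin k))) ×ˢ (univ : Finset (Option (Fin k)))),
          h (Function.update (Function.update p.1 i1 p.2.1) i2 p.2.2) := by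
    rw [Finset.sum_product]
    refine Finset.sum_congr rfl fun R _ => ?_
    rw [Finset.sum_product]
  rw [this]
  refine Finset.sum_bij'
    (fun S _ => (Function.update (Function.update S i1 none) i2 none, (S i1, S i2)))
    (fun p _ => Function.update (Function.update p.1 i1 p.2.1) i2 p.2.2)
    ?_ ?_ ?_ ?_ ?_
  · intro S _
    simp only [Finset.mem_product, Finset.mem_filter, Finset.mem_univ, true_and]
    refine ⟨⟨?_, ?_⟩, trivial⟩
    · simp [upd2_apply, h12]
    · simp [upd2_apply]
  · intro p _; exact Finset.mem_univ _
  · intro S _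
    funext e
    simp only [upd2_apply]
    split_ifs <;> subst_vars <;> rfl
  · intro p hp
    simp only [Finset.mem_product, Finset.mem_filter, Finset.mem_univ, true_and] at hp
    obtain ⟨⟨h1, h2⟩, -⟩ := hp
    have e1 : (Function.update (Function.update p.1 i1 p.2.1) i2 p.2.2) i1 = p.2.1 := by
      rw [upd2_apply, if_neg h12, if_pos rfl]
    have e2 : (Function.update (Function.update p.1 i1 p.2.1) i2 p.2.2) i2 = p.2.2 := by
      rw [upd2_apply, if_pos rfl]
    have e3 : Function.update (Function.update
        (Function.update (Function.update p.1 i1 p.2.1) i2 p.2.2) i1 none) i2 none = p.1 := by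
      funext e
      simp only [upd2_apply]
      split_ifs <;> subst_vars <;> simp [h1, h2]
    exact Prod.ext e3 (Prod.ext e1 e2)
  · intro S _
    congr 1
    funext e
    simp only [upd2_apply]
    split_ifs <;> subst_vars <;> rfl

lemma option_sum_eq (g : Option (Fin k) → ℝ) (b : Fin k → ℝ) :
    (-(∑ j, b j)) * g none + ∑ j, b j * g (some j) = ∑ j, b j * (g (some j) - g none) := by
  simp only [mul_sub, Finset.sum_sub_distrib, ← Finset.sum_mul]
  ring

lemma meet_eq (R : Fin n → Option (Fin k)) (i1 i2 : Fin n) (h12 : i1 ≠ i2)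
    (hR1 : R i1 = none) (hR2 : R i2 = none) (j1 j2 : Fin k) :
    kmeet (Function.update R i1 (some j1)) (Function.update R i2 (some j2)) = R := by
  funext e
  unfold kmeet
  simp only [Function.update_apply]
  rcases eq_or_ne e i1 with rfl | he1
  · simp [h12, hR1]
  rcases eq_or_ne e i2 with rfl | he2
  · simp [he1, hR2]
  · simp [he1, he2]

lemma join_eq (R : Fin n → Option (Fin k)) (i1 i2 : Fin n) (h12 : i1 ≠ i2)
    (hR1 : R i1 = none) (hR2 : R i2 = none) (j1 j2 : Fin k) :
    kjoin (Function.update R i1 (some j1)) (Function.update R i2 (some j2))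
      = Function.update (Function.update R i1 (some j1)) i2 (some j2) := by
  funext e
  unfold kjoin
  simp only [Function.update_apply, upd2_apply]
  rcases eq_or_ne e i2 with rfl | he2
  · simp [h12, hR2, Ne.symm h12]
  rcases eq_or_ne e i1 with rfl | he1
  · simp [he2, hR1]
  · simp only [if_neg he1, if_neg he2]
    cases h : R e with
    | none => rfl
    | some a => simp

lemma pair_nonpos (f : (Fin n → Option (Fin k)) → ℝ) (hf : KSubmodular f)
    (d : Fin n → Fin k → ℝ) (hd : ∀ i j, 0 ≤ d i j) (i1 i2 : Fin n) (h12 : i1 ≠ i2)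
    (R : Fin n → Option (Fin k)) (hR1 : R i1 = none) (hR2 : R i2 = none) :
    ∑ v1 : Option (Fin k), ∑ v2 : Option (Fin k),
      f (Function.update (Function.update R i1 v1) i2 v2) * (Bv d i1 v1 * Bv d i2 v2) ≤ 0 := by
  classical
  set c : Option (Fin k) → Option (Fin k) → ℝ :=
    fun v1 v2 => f (Function.update (Function.update R i1 v1) i2 v2) with hc
  have upd_none : ∀ v1 : Option (Fin k), Function.update (Function.update R i1 v1) i2 none
      = Function.update R i1 v1 := by
    intro v1
    funext e
    simp only [upd2_apply, Function.update_apply]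
    split_ifs <;> subst_vars <;> simp_all
  have upd_none' : Function.update R i1 (none : Option (Fin k)) = R := by
    funext e
    rw [Function.update_apply]
    split_ifs <;> subst_vars <;> simp [hR1]
  have key : ∀ j1 j2 : Fin k,
      c (some j1) (some j2) - c (some j1) none - c none (some j2) + c none none ≤ 0 := by
    intro j1 j2
    have h := hf (Function.update R i1 (some j1)) (Function.update R i2 (some j2))
    rw [meet_eq R i1 i2 h12 hR1 hR2 j1 j2, join_eq R i1 i2 h12 hR1 hR2 j1 j2] at h
    have e1 : c (some j1) (some j2)
        = f (Function.update (Function.update R i1 (some j1)) i2 (some j2)) := rfl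
    have e2 : c (some j1) none = f (Function.update R i1 (some j1)) := by
      show f (Function.update (Function.update R i1 (some j1)) i2 none) = _
      rw [upd_none]
    have e3 : c none (some j2) = f (Function.update R i2 (some j2)) := by
      show f (Function.update (Function.update R i1 none) i2 (some j2)) = _
      rw [upd_none']
    have e4 : c none none = f R := by
      show f (Function.update (Function.update R i1 none) i2 none) = _
      rw [upd_none, upd_none']
    rw [e1, e2, e3, e4]
    linarith
  have expand : ∑ v1 : Option (Fin k), ∑ v2 : Option (Fin k), c v1 v2 * (Bv d i1 v1 * Bv d i2 v2)
      = ∑ j1 : Fin k, d i1 j1 * ∑ j2 : Fin k, d i2 j2 *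
          (c (some j1) (some j2) - c (some j1) none - c none (some j2) + c none none) := by
    have step1 : ∀ v1 : Option (Fin k), ∑ v2 : Option (Fin k), c v1 v2 * (Bv d i1 v1 * Bv d i2 v2)
        = Bv d i1 v1 * ∑ v2 : Option (Fin k), Bv d i2 v2 * c v1 v2 := by
      intro v1
      rw [Finset.mul_sum]
      exact Finset.sum_congr rfl fun v2 _ => by ring
    rw [Finset.sum_congr rfl fun v1 _ => step1 v1]
    have inner : ∀ v1 : Option (Fin k), ∑ v2 : Option (Fin k), Bv d i2 v2 * c v1 v2
        = ∑ j2, d i2 j2 * (c v1 (some j2) - c v1 none) := by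
      intro v1
      rw [univ_option, Finset.sum_insertNone, ← option_sum_eq (fun v2 => c v1 v2) (fun j => d i2 j)]
      simp [Bv]
    rw [Finset.sum_congr rfl fun v1 _ => by rw [inner v1]]
    rw [univ_option, Finset.sum_insertNone]
    have hB1 : Bv d i1 none = -(∑ j, d i1 j) := rfl
    have hB2 : ∀ j, Bv d i1 (some j) = d i1 j := fun _ => rfl
    simp only [hB1, hB2]
    rw [option_sum_eq (fun v1 => ∑ j2, d i2 j2 * (c v1 (some j2) - c v1 none)) (fun j => d i1 j)]
    refine Finset.sum_congr rfl fun j1 _ => ?_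
    congr 1
    rw [← Finset.sum_sub_distrib]
    refine Finset.sum_congr rfl fun j2 _ => ?_
    ring
  rw [expand]
  refine Finset.sum_nonpos fun j1 _ => ?_
  refine mul_nonpos_of_nonneg_of_nonpos (hd i1 j1) ?_
  refine Finset.sum_nonpos fun j2 _ => ?_
  exact mul_nonpos_of_nonneg_of_nonpos (hd i2 j2) (key j1 j2)

end Aux

theorem mlext_concave_along_nonneg_directions {n k : ℕ}
    (f : (Fin n → Option (Fin k)) → ℝ) (hf : KSubmodular f)
    (x d : Fin n → Fin k → ℝ) (hd : ∀ i j, 0 ≤ d i j) :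
    ConcaveOn ℝ {t : ℝ | inP (fun i j => x i j + t * d i j)}
      (fun t : ℝ => mlext f (fun i j => x i j + t * d i j)) := by
  classical
  have hconv : Convex ℝ {t : ℝ | inP (fun i j => x i j + t * d i j)} := by
    intro t1 ht1 t2 ht2 a b ha hb hab
    simp only [Set.mem_setOf_eq, inP, smul_eq_mul] at *
    obtain ⟨hbox1, hsum1⟩ := ht1
    obtain ⟨hbox2, hsum2⟩ := ht2
    refine ⟨fun i j => ?_, fun i => ?_⟩
    · obtain ⟨h1l, h1u⟩ := hbox1 i j
      obtain ⟨h2l, h2u⟩ := hbox2 i j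
      have e : x i j + (a * t1 + b * t2) * d i j
          = a * (x i j + t1 * d i j) + b * (x i j + t2 * d i j) := by
        linear_combination (-(x i j)) * hab
      rw [e]
      constructor
      · exact add_nonneg (mul_nonneg ha h1l) (mul_nonneg hb h2l)
      · nlinarith [mul_le_mul_of_nonneg_left h1u ha, mul_le_mul_of_nonneg_left h2u hb]
    · have e : ∑ j, (x i j + (a * t1 + b * t2) * d i j)
          = a * (∑ j, (x i j + t1 * d i j)) + b * (∑ j, (x i j + t2 * d i j)) := by
        rw [Finset.mul_sum, Finset.mul_sum, ← Finset.sum_add_distrib]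
        refine Finset.sum_congr rfl fun j _ => ?_
        linear_combination (-(x i j)) * hab
      rw [e]
      nlinarith [mul_le_mul_of_nonneg_left (hsum1 i) ha, mul_le_mul_of_nonneg_left (hsum2 i) hb]
  have hQ : (fun t : ℝ => mlext f (fun i j => x i j + t * d i j))
      = fun t => (Qp f x d).eval t := funext fun t => (eval_Qp f x d t).symm
  rw [hQ]
  have hderiv : deriv (fun t => (Qp f x d).eval t)
      = fun t => ((Qp f x d).derivative).eval t := funext fun t => Polynomial.deriv (Qp f x d)
  refine concaveOn_of_deriv2_nonpos' hconv
    ((Polynomial.differentiable _).differentiableOn) ?_ ?_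
  · rw [hderiv]
    exact (Polynomial.differentiable _).differentiableOn
  · intro t ht
    have h2 : deriv^[2] (fun t => (Qp f x d).eval t) t
        = (Polynomial.derivative (Polynomial.derivative (Qp f x d))).eval t := by
      show deriv (deriv (fun t => (Qp f x d).eval t)) t = _
      rw [hderiv, Polynomial.deriv]
    rw [h2, deriv2_Qp_eval]
    simp only [Set.mem_setOf_eq] at ht
    have hfac : ∀ (i : Fin n) (v : Option (Fin k)), 0 ≤ Av x i v + Bv d i v * t := by
      intro i v
      rw [← weight_eq x d t i v]
      cases v with
      | none =>
        simp only [Option.elim]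
        have := ht.2 i
        linarith
      | some j => exact (ht.1 i j).1
    refine Finset.sum_nonpos fun i1 _ => ?_
    refine Finset.sum_nonpos fun i2 hi2 => ?_
    have h12 : i1 ≠ i2 := (Finset.ne_of_mem_erase hi2).symm
    rw [sum_pi_split i1 i2 h12]
    refine Finset.sum_nonpos fun R hR => ?_
    simp only [Finset.mem_filter, Finset.mem_univ, true_and] at hR
    obtain ⟨hR1, hR2⟩ := hR
    have hval1 : ∀ v1 v2 : Option (Fin k),
        (Function.update (Function.update R i1 v1) i2 v2) i1 = v1 := fun v1 v2 => by
      rw [Function.update_of_ne h12, Function.update_self]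
    have hval2 : ∀ v1 v2 : Option (Fin k),
        (Function.update (Function.update R i1 v1) i2 v2) i2 = v2 := fun v1 v2 => by
      rw [Function.update_self]
    have hvalo : ∀ (v1 v2 : Option (Fin k)) (i : Fin n), i ≠ i1 → i ≠ i2 →
        (Function.update (Function.update R i1 v1) i2 v2) i = R i := fun v1 v2 i h1 h2 => by
      rw [Function.update_of_ne h2, Function.update_of_ne h1]
    have hW : (0:ℝ) ≤ ∏ i ∈ (univ.erase i1).erase i2, (Av x i (R i) + Bv d i (R i) * t) :=
      Finset.prod_nonneg fun i _ => hfac i (R i)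
    have rearr : ∑ v1 : Option (Fin k), ∑ v2 : Option (Fin k),
        f (Function.update (Function.update R i1 v1) i2 v2) *
          (Bv d i1 ((Function.update (Function.update R i1 v1) i2 v2) i1) *
            Bv d i2 ((Function.update (Function.update R i1 v1) i2 v2) i2) *
            ∏ i ∈ (univ.erase i1).erase i2,
              (Av x i ((Function.update (Function.update R i1 v1) i2 v2) i)
                + Bv d i ((Function.update (Function.update R i1 v1) i2 v2) i) * t))
        = (∑ v1 : Option (Fin k), ∑ v2 : Option (Fin k),
            f (Function.update (Function.update R i1 v1) i2 v2) * (Bv d i1 v1 * Bv d i2 v2)) *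
          ∏ i ∈ (univ.erase i1).erase i2, (Av x i (R i) + Bv d i (R i) * t) := by
      rw [Finset.sum_mul]
      refine Finset.sum_congr rfl fun v1 _ => ?_
      rw [Finset.sum_mul]
      refine Finset.sum_congr rfl fun v2 _ => ?_
      rw [hval1, hval2]
      have : ∏ i ∈ (univ.erase i1).erase i2,
          (Av x i ((Function.update (Function.update R i1 v1) i2 v2) i)
            + Bv d i ((Function.update (Function.update R i1 v1) i2 v2) i) * t)
          = ∏ i ∈ (univ.erase i1).erase i2, (Av x i (R i) + Bv d i (R i) * t) := by
        refine Finset.prod_congr rfl fun i hi => ?_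
        have hi2' : i ≠ i2 := Finset.ne_of_mem_erase hi
        have hi1' : i ≠ i1 := Finset.ne_of_mem_erase (Finset.mem_of_mem_erase hi)
        rw [hvalo v1 v2 i hi1' hi2']
      rw [this]
      ring
    rw [rearr]
    exact mul_nonpos_of_nonpos_of_nonneg (pair_nonpos f hf d hd i1 i2 h12 R hR1 hR2) hW
end

section
/- Let F be the multilinear extension of a k-submodular function f, and let e_{i,j} denote the one-hot vector with 1 at coordinate (i,j). Then for any i₁ ≠ i₂ in [n] and any j₁, j₂ ∈ [k], F is convex along any line of direction e_{i₁,j₁} − e_{i₂,j₂}: the function t ↦ F(x + t(e_{i₁,j₁} − e_{i₂,j₂})) is convex on the interval where the argument stays in the polytope P. -/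
open Finset

/-- The one-hot vector with value `1` at coordinate `(i,j)`. -/
def onehot {n k : ℕ} (i : Fin n) (j : Fin k) : Fin n → Fin k → ℝ :=
  fun i' j' => if i' = i ∧ j' = j then 1 else 0

/-! Along `d = e_{i₁,j₁} - e_{i₂,j₂}` only the factors of rows `i₁` and `i₂` in each term of
`F` move, each affinely in `t`, so `t ↦ F (x + t • d)` is a quadratic polynomial. Grouping the
terms of its leading coefficient by the labelling `T` of the other rows (with `T i₁ = T i₂ = none`)
writes it as a sum of products of the weights of the other rows, which are nonnegative as soon
as the line meets `P`, with `f (T[i₁ ↦ j₁]) + f (T[i₂ ↦ j₂]) - f T - f (T[i₁ ↦ j₁, i₂ ↦ j₂])`,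
which is nonnegative by `k`-submodularity: the meet and join of `T[i₁ ↦ j₁]` and `T[i₂ ↦ j₂]`
are `T` and `T[i₁ ↦ j₁, i₂ ↦ j₂]`. -/

lemma convexOn_univ_quadratic {A : ℝ} (hA : 0 ≤ A) (B C : ℝ) :
    ConvexOn ℝ Set.univ fun t : ℝ => A * t ^ 2 + B * t + C := by
  refine ⟨convex_univ, fun t₁ _ t₂ _ a b ha hb hab => ?_⟩
  obtain rfl : b = 1 - a := by linarith
  have key : 0 ≤ A * (a * (1 - a) * (t₁ - t₂) ^ 2) :=
    mul_nonneg hA (mul_nonneg (mul_nonneg ha hb) (sq_nonneg _))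
  simp only [smul_eq_mul]
  linear_combination key

lemma convexOn_univ_sum_mul_affine_mul_affine {ι : Type*} [Fintype ι] (c p q r s : ι → ℝ)
    (h : 0 ≤ ∑ i, c i * (q i * s i)) :
    ConvexOn ℝ Set.univ fun t : ℝ => ∑ i, c i * ((p i + t * q i) * (r i + t * s i)) := by
  have expand : (fun t : ℝ => ∑ i, c i * ((p i + t * q i) * (r i + t * s i))) = fun t =>
      (∑ i, c i * (q i * s i)) * t ^ 2 + (∑ i, c i * (p i * s i + q i * r i)) * t +
        ∑ i, c i * (p i * r i) := by
    funext t
    simp only [Finset.sum_mul, ← Finset.sum_add_distrib]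
    exact Finset.sum_congr rfl fun i _ => by ring
  rw [expand]
  exact convexOn_univ_quadratic h _ _

lemma prod_add_mul_eq_of_eq_zero_off_pair {ι : Type*} [Fintype ι] [DecidableEq ι] {i₁ i₂ : ι}
    (hi : i₁ ≠ i₂) (u v : ι → ℝ) (hv : ∀ i ∉ ({i₁, i₂} : Finset ι), v i = 0) (t : ℝ) :
    ∏ i, (u i + t * v i) =
      (u i₁ + t * v i₁) * (u i₂ + t * v i₂) * ∏ i ∈ {i₁, i₂}ᶜ, u i := by
  rw [← Finset.prod_mul_prod_compl {i₁, i₂}, Finset.prod_pair hi]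
  congr 1
  refine Finset.prod_congr rfl fun i hmem => ?_
  rw [hv i (Finset.mem_compl.mp hmem), mul_zero, add_zero]

lemma Fintype.sum_eq_sum_update_update {ι α M : Type*} [Fintype ι] [DecidableEq ι]
    [Fintype α] [DecidableEq α] [AddCommMonoid M] {i₁ i₂ : ι} (hi : i₁ ≠ i₂) (o : α)
    (g : (ι → α) → M) :
    ∑ S, g S = ∑ T with T i₁ = o ∧ T i₂ = o, ∑ a, ∑ b,
      g (Function.update (Function.update T i₁ a) i₂ b) := by
  simp only [← Finset.sum_product']
  refine Finset.sum_nbij' (fun S => (Function.update (Function.update S i₁ o) i₂ o,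
      (S i₁, S i₂))) (fun p => Function.update (Function.update p.1 i₁ p.2.1) i₂ p.2.2)
    ?_ ?_ ?_ ?_ ?_
  · intro S _
    simp [hi]
  · intro _ _
    exact Finset.mem_univ _
  · intro S _
    funext e
    by_cases h₂ : e = i₂ <;> by_cases h₁ : e = i₁ <;> simp_all
  · rintro ⟨T, a, b⟩ hT
    obtain ⟨hT₁, hT₂⟩ := (Finset.mem_filter.mp (Finset.mem_product.mp hT).1).2
    refine Prod.ext ?_ (Prod.ext ?_ ?_)
    · funext e
      by_cases h₂ : e = i₂ <;> by_cases h₁ : e = i₁ <;> simp_all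
    · simp [hi]
    · simp
  · intro S _
    congr 1
    funext e
    by_cases h₂ : e = i₂ <;> by_cases h₁ : e = i₁ <;> simp_all

lemma KSubmodular.apply_add_apply_update_update_le {V : Type*} [DecidableEq V] {k : ℕ}
    {f : (V → Option (Fin k)) → ℝ} (hf : KSubmodular f) {i₁ i₂ : V} (hi : i₁ ≠ i₂)
    (j₁ j₂ : Fin k) {T : V → Option (Fin k)} (hT₁ : T i₁ = none) (hT₂ : T i₂ = none) :
    f T + f (Function.update (Function.update T i₁ (some j₁)) i₂ (some j₂)) ≤
      f (Function.update T i₁ (some j₁)) + f (Function.update T i₂ (some j₂)) := by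
  have hmeet : kmeet (Function.update T i₁ (some j₁)) (Function.update T i₂ (some j₂)) = T := by
    funext e
    by_cases h₂ : e = i₂ <;> by_cases h₁ : e = i₁ <;> simp_all [kmeet]
  have hjoin : kjoin (Function.update T i₁ (some j₁)) (Function.update T i₂ (some j₂)) =
      Function.update (Function.update T i₁ (some j₁)) i₂ (some j₂) := by
    funext e
    by_cases h₂ : e = i₂ <;> by_cases h₁ : e = i₁
    · simp_all
    · simp_all [kjoin]
    · simp_all [kjoin]
    · cases h : T e <;> simp_all [kjoin]
  simpa only [hmeet, hjoin] using
    hf (Function.update T i₁ (some j₁)) (Function.update T i₂ (some j₂))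

section RowWeights

variable {n k : ℕ}

def rowWeight (y : Fin n → Fin k → ℝ) (i : Fin n) (a : Option (Fin k)) : ℝ :=
  a.elim (1 - ∑ j, y i j) (y i)

def rowSlope (d : Fin n → Fin k → ℝ) (i : Fin n) (a : Option (Fin k)) : ℝ :=
  a.elim (-∑ j, d i j) (d i)

lemma mlext_eq_sum_prod_rowWeight (f : (Fin n → Option (Fin k)) → ℝ) (y : Fin n → Fin k → ℝ) :
    mlext f y = ∑ S, f S * ∏ i, rowWeight y i (S i) := rfl

lemma rowWeight_add_mul (x d : Fin n → Fin k → ℝ) (t : ℝ) (i : Fin n) (a : Option (Fin k)) :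
    rowWeight (fun i j => x i j + t * d i j) i a = rowWeight x i a + t * rowSlope d i a := by
  cases a
  · simp only [rowWeight, rowSlope, Option.elim, Finset.sum_add_distrib, ← Finset.mul_sum]
    ring
  · rfl

lemma rowWeight_nonneg {y : Fin n → Fin k → ℝ} (hy : inP y) (i : Fin n) (a : Option (Fin k)) :
    0 ≤ rowWeight y i a := by
  cases a
  · exact sub_nonneg.mpr (hy.2 i)
  · exact (hy.1 i _).1

lemma convex_setOf_inP_line (x d : Fin n → Fin k → ℝ) :
    Convex ℝ {t : ℝ | inP (fun i j => x i j + t * d i j)} := by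
  intro t₁ ht₁ t₂ ht₂ a b ha hb hab
  have hline : (fun i j => x i j + (a • t₁ + b • t₂) * d i j) =
      a • (fun i j => x i j + t₁ * d i j) + b • (fun i j => x i j + t₂ * d i j) := by
    funext i j
    simp only [Pi.add_apply, Pi.smul_apply, smul_eq_mul]
    linear_combination (-x i j) * hab
  refine ⟨fun i j => ?_, fun i => ?_⟩
  · rw [hline]
    exact convex_Icc (0 : ℝ) 1 (ht₁.1 i j) (ht₂.1 i j) ha hb hab
  · rw [hline]
    simp only [Pi.add_apply, Pi.smul_apply]
    rw [Finset.sum_add_distrib, ← Finset.smul_sum, ← Finset.smul_sum]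
    exact convex_Iic (1 : ℝ) (ht₁.2 i) (ht₂.2 i) ha hb hab

end RowWeights

section SwapLine

variable {n k : ℕ}

lemma rowSlope_swap_eq_zero {i₁ i₂ i : Fin n} (hi : i ∉ ({i₁, i₂} : Finset (Fin n)))
    (j₁ j₂ : Fin k) (a : Option (Fin k)) :
    rowSlope (fun i j => onehot i₁ j₁ i j - onehot i₂ j₂ i j) i a = 0 := by
  obtain ⟨h₁, h₂⟩ : i ≠ i₁ ∧ i ≠ i₂ := by simpa [not_or] using hi
  cases a <;> simp [rowSlope, onehot, h₁, h₂]

lemma sum_mul_rowSlope_swap_nonneg {f : (Fin n → Option (Fin k)) → ℝ} (hf : KSubmodular f)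
    {i₁ i₂ : Fin n} (hi : i₁ ≠ i₂) (j₁ j₂ : Fin k) {x : Fin n → Fin k → ℝ}
    (hx : ∀ i ∉ ({i₁, i₂} : Finset (Fin n)), ∀ a, 0 ≤ rowWeight x i a) :
    0 ≤ ∑ S, f S * (∏ i ∈ {i₁, i₂}ᶜ, rowWeight x i (S i)) *
      (rowSlope (fun i j => onehot i₁ j₁ i j - onehot i₂ j₂ i j) i₁ (S i₁) *
        rowSlope (fun i j => onehot i₁ j₁ i j - onehot i₂ j₂ i j) i₂ (S i₂)) := by
  rw [Fintype.sum_eq_sum_update_update hi none]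
  refine Finset.sum_nonneg fun T hT => ?_
  obtain ⟨hT₁, hT₂⟩ := (Finset.mem_filter.mp hT).2
  have hR : ∀ a b, ∏ i ∈ {i₁, i₂}ᶜ,
      rowWeight x i (Function.update (Function.update T i₁ a) i₂ b i) =
        ∏ i ∈ {i₁, i₂}ᶜ, rowWeight x i (T i) := by
    intro a b
    refine Finset.prod_congr rfl fun i hmem => ?_
    obtain ⟨h₁, h₂⟩ : i ≠ i₁ ∧ i ≠ i₂ := by simpa [not_or] using hmem
    simp [h₁, h₂]
  have hR_nonneg : 0 ≤ ∏ i ∈ {i₁, i₂}ᶜ, rowWeight x i (T i) :=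
    Finset.prod_nonneg fun i hmem => hx i (Finset.mem_compl.mp hmem) _
  have hsub := hf.apply_add_apply_update_update_le hi j₁ j₂ hT₁ hT₂
  have hT₁' : Function.update T i₁ none = T := hT₁ ▸ Function.update_eq_self i₁ T
  have hT₂' : Function.update T i₂ none = T := hT₂ ▸ Function.update_eq_self i₂ T
  have hT₂'' : Function.update (Function.update T i₁ (some j₁)) i₂ none =
      Function.update T i₁ (some j₁) := by rw [Function.update_comm hi, hT₂']
  simp only [Fintype.sum_option, hR, hT₁']
  set R := ∏ i ∈ {i₁, i₂}ᶜ, rowWeight x i (T i)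
  simp [rowSlope, onehot, hi, hi.symm, hT₁, hT₂', hT₂'', Finset.sum_add_distrib]
  linarith [mul_nonneg hR_nonneg (sub_nonneg.mpr hsub)]

lemma convexOn_univ_mlext_swap_line {f : (Fin n → Option (Fin k)) → ℝ} (hf : KSubmodular f)
    {i₁ i₂ : Fin n} (hi : i₁ ≠ i₂) (j₁ j₂ : Fin k) {x : Fin n → Fin k → ℝ}
    (hx : ∀ i ∉ ({i₁, i₂} : Finset (Fin n)), ∀ a, 0 ≤ rowWeight x i a) :
    ConvexOn ℝ Set.univ fun t : ℝ =>
      mlext f (fun i j => x i j + t * (onehot i₁ j₁ i j - onehot i₂ j₂ i j)) := by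
  set d : Fin n → Fin k → ℝ := fun i j => onehot i₁ j₁ i j - onehot i₂ j₂ i j
  have hquad : (fun t : ℝ => mlext f (fun i j => x i j + t * d i j)) = fun t =>
      ∑ S, (f S * ∏ i ∈ {i₁, i₂}ᶜ, rowWeight x i (S i)) *
        ((rowWeight x i₁ (S i₁) + t * rowSlope d i₁ (S i₁)) *
          (rowWeight x i₂ (S i₂) + t * rowSlope d i₂ (S i₂))) := by
    funext t
    rw [mlext_eq_sum_prod_rowWeight]
    refine Finset.sum_congr rfl fun S _ => ?_
    simp only [rowWeight_add_mul]
    rw [prod_add_mul_eq_of_eq_zero_off_pair hi _ _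
      (fun i hmem => rowSlope_swap_eq_zero hmem j₁ j₂ (S i))]
    ring
  rw [hquad]
  exact convexOn_univ_sum_mul_affine_mul_affine _ _ _ _ _
    (by simpa only [mul_assoc] using sum_mul_rowSlope_swap_nonneg hf hi j₁ j₂ hx)

end SwapLine

theorem mlext_convex_along_swap_directions {n k : ℕ}
    (f : (Fin n → Option (Fin k)) → ℝ) (hf : KSubmodular f)
    (i₁ i₂ : Fin n) (hi : i₁ ≠ i₂) (j₁ j₂ : Fin k) (x : Fin n → Fin k → ℝ) :
    ConvexOn ℝ
      {t : ℝ | inP (fun i j => x i j + t * (onehot i₁ j₁ i j - onehot i₂ j₂ i j))}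
      (fun t : ℝ =>
        mlext f (fun i j => x i j + t * (onehot i₁ j₁ i j - onehot i₂ j₂ i j))) := by
  refine ⟨convex_setOf_inP_line x _, fun t₀ ht₀ => ?_⟩
  have hx : ∀ i ∉ ({i₁, i₂} : Finset (Fin n)), ∀ a, 0 ≤ rowWeight x i a := by
    intro i hmem a
    simpa [rowWeight_add_mul, rowSlope_swap_eq_zero hmem] using rowWeight_nonneg ht₀ i a
  exact fun t _ => (convexOn_univ_mlext_swap_line hf hi j₁ j₂ hx).2 trivial trivial
end

section
/- Let F be the multilinear extension of a k-submodular function. If x ≤ y coordinatewise in the polytope P, then ∂F(x)/∂x_{i,j} ≥ ∂F(y)/∂x_{i,j} for all i ∈ [n] and j ∈ [k] (the gradient is antitone). -/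
open Finset

/-!
`F(x)` is the expectation of `f` under the random labelling in which each element `i`
independently receives label `j` with probability `x i j` (and no label otherwise).
Resampling the label of one element shows that `F` is affine in each coordinate `x i j`, with
slope the expectation of the marginal `Δ_{i,j} f`. Hence `∂F/∂x_{i,j} = E[Δ_{i,j} f]`, and raising
`x i₀ j₀` changes it by a nonnegative multiple of `E[Δ_{i₀,j₀} Δ_{i,j} f]`. This second
difference vanishes for `i₀ = i` and, for `i₀ ≠ i`, is `≤ 0` by `k`-submodularity applied to
`S + (i, j)` and `S + (i₀, j₀)`. Raising `x` to `y` one coordinate at a time inside `P` finishes.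
-/

section SumUpdate

variable {ι β R : Type*} [Fintype ι] [DecidableEq ι] [Fintype β] [Semiring R]

theorem Fintype.sum_eq_sum_mul_sum_update (i : ι) (w : β → R) (hw : ∑ b, w b = 1)
    (φ : (ι → β) → R) :
    ∑ S, φ S = ∑ S, w (S i) * ∑ b, φ (Function.update S i b) := by
  let g : (ι → β) × β → (ι → β) × β := fun p => (Function.update p.1 i p.2, p.1 i)
  have hg : Function.Involutive g := fun p => by simp [g]
  calc ∑ S, φ S = ∑ p : (ι → β) × β, w p.2 * φ p.1 := by
        simp [Fintype.sum_prod_type, ← Finset.sum_mul, hw]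
    _ = ∑ p : (ι → β) × β, w (g p).2 * φ (g p).1 :=
        (hg.bijective.sum_comp fun p => w p.2 * φ p.1).symm
    _ = ∑ S, w (S i) * ∑ b, φ (Function.update S i b) := by
        simp [g, Fintype.sum_prod_type, Finset.mul_sum]

end SumUpdate

section MultilinearExtension

variable {n k : ℕ}

def labelWeight (x : Fin n → Fin k → ℝ) (i : Fin n) (a : Option (Fin k)) : ℝ :=
  a.elim (1 - ∑ j, x i j) (x i)

def marginal (i : Fin n) (j : Fin k) (g : (Fin n → Option (Fin k)) → ℝ)
    (S : Fin n → Option (Fin k)) : ℝ :=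
  g (Function.update S i (some j)) - g (Function.update S i none)

theorem mlext_eq_sum_prod_labelWeight (g : (Fin n → Option (Fin k)) → ℝ)
    (x : Fin n → Fin k → ℝ) :
    mlext g x = ∑ S, g S * ∏ i, labelWeight x i (S i) :=
  rfl

theorem sum_labelWeight (x : Fin n → Fin k → ℝ) (i : Fin n) :
    ∑ a, labelWeight x i a = 1 := by
  simp [labelWeight, Fintype.sum_option]

theorem labelWeight_nonneg {x : Fin n → Fin k → ℝ} (hx : inP x) (i : Fin n)
    (a : Option (Fin k)) : 0 ≤ labelWeight x i a := by
  cases a with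
  | none => exact sub_nonneg.mpr (hx.2 i)
  | some j => exact (hx.1 i j).1

theorem upd_apply_of_ne {x : Fin n → Fin k → ℝ} {i i' : Fin n} (j : Fin k) (t : ℝ)
    (h : i' ≠ i) : upd x i j t i' = x i' := by
  funext j'
  simp [upd, h]

theorem sum_labelWeight_upd_mul (x : Fin n → Fin k → ℝ) (i : Fin n) (j : Fin k) (t : ℝ)
    (G : Option (Fin k) → ℝ) :
    ∑ a, labelWeight (upd x i j t) i a * G a =
      ∑ a, labelWeight x i a * G a + (t - x i j) * (G (some j) - G none) := by
  have hrow : upd x i j t i = x i + Pi.single j (t - x i j) := by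
    funext j'
    by_cases h : j' = j <;> simp [upd, h]
  simp only [Fintype.sum_option, labelWeight, Option.elim, hrow]
  simp only [Pi.add_apply, Pi.single_apply, Finset.sum_add_distrib, Finset.sum_ite_eq',
    Finset.mem_univ, if_true, add_mul, ite_mul, zero_mul]
  ring

theorem mlext_eq_sum_mul_sum_update {x y : Fin n → Fin k → ℝ} {i : Fin n}
    (hxy : ∀ i' ≠ i, y i' = x i') (g : (Fin n → Option (Fin k)) → ℝ) :
    mlext g y = ∑ S, (∏ i', labelWeight x i' (S i')) *
      ∑ a, labelWeight y i a * g (Function.update S i a) := by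
  rw [mlext_eq_sum_prod_labelWeight,
    Fintype.sum_eq_sum_mul_sum_update i (labelWeight x i) (sum_labelWeight x i)]
  refine Finset.sum_congr rfl fun S _ => ?_
  have hrest : ∀ a, ∏ i' ∈ {i}ᶜ, labelWeight y i' (Function.update S i a i') =
      ∏ i' ∈ {i}ᶜ, labelWeight x i' (S i') := fun a =>
    Finset.prod_congr rfl fun i' hi' => by
      have hne : i' ≠ i := by simpa using hi'
      simp only [labelWeight, Function.update_of_ne hne, hxy i' hne]
  simp only [Fintype.prod_eq_mul_prod_compl i, Function.update_self, hrest, Finset.mul_sum]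
  exact Finset.sum_congr rfl fun a _ => by ring

theorem mlext_upd (g : (Fin n → Option (Fin k)) → ℝ) (x : Fin n → Fin k → ℝ) (i : Fin n)
    (j : Fin k) (t : ℝ) :
    mlext g (upd x i j t) = mlext g x + (t - x i j) * mlext (marginal i j g) x := by
  rw [mlext_eq_sum_mul_sum_update (y := upd x i j t) (fun _ => upd_apply_of_ne j t) g,
    mlext_eq_sum_mul_sum_update (y := x) (fun _ _ => rfl) g]
  simp only [sum_labelWeight_upd_mul, mlext_eq_sum_prod_labelWeight, marginal, mul_add,
    Finset.sum_add_distrib, Finset.mul_sum]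
  congr 1
  exact Finset.sum_congr rfl fun S _ => by ring

theorem hasDerivAt_mlext_upd (g : (Fin n → Option (Fin k)) → ℝ) (x : Fin n → Fin k → ℝ)
    (i : Fin n) (j : Fin k) (s : ℝ) :
    HasDerivAt (fun t => mlext g (upd x i j t)) (mlext (marginal i j g) x) s := by
  simp only [mlext_upd]
  simpa using ((hasDerivAt_id s).sub_const (x i j)).mul_const (mlext (marginal i j g) x)
    |>.const_add (mlext g x)

theorem pderivF_eq_mlext_marginal (g : (Fin n → Option (Fin k)) → ℝ) (i : Fin n) (j : Fin k)
    (x : Fin n → Fin k → ℝ) : pderivF g i j x = mlext (marginal i j g) x :=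
  (hasDerivAt_mlext_upd g x i j (x i j)).deriv

theorem mlext_nonpos {g : (Fin n → Option (Fin k)) → ℝ} (hg : ∀ S, g S ≤ 0)
    {x : Fin n → Fin k → ℝ} (hx : inP x) : mlext g x ≤ 0 :=
  Finset.sum_nonpos fun S _ => mul_nonpos_of_nonpos_of_nonneg (hg S)
    (Finset.prod_nonneg fun i _ => labelWeight_nonneg hx i (S i))

theorem mlext_upd_le {g : (Fin n → Option (Fin k)) → ℝ} {i : Fin n} {j : Fin k}
    (hg : ∀ S, marginal i j g S ≤ 0) {x : Fin n → Fin k → ℝ} (hx : inP x) {t : ℝ}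
    (ht : x i j ≤ t) : mlext g (upd x i j t) ≤ mlext g x := by
  rw [mlext_upd]
  linarith [mul_nonpos_of_nonneg_of_nonpos (sub_nonneg.mpr ht) (mlext_nonpos hg hx)]

theorem KSubmodular.marginal_marginal_nonpos {f : (Fin n → Option (Fin k)) → ℝ}
    (hf : KSubmodular f) (i i₀ : Fin n) (j j₀ : Fin k) (S : Fin n → Option (Fin k)) :
    marginal i₀ j₀ (marginal i j f) S ≤ 0 := by
  rcases eq_or_ne i₀ i with rfl | hne
  · simp [marginal]
  set T := Function.update (Function.update S i₀ none) i none
  have hA : Function.update (Function.update S i₀ none) i (some j) =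
      Function.update T i (some j) := by
    simp [T]
  have hB : Function.update (Function.update S i₀ (some j₀)) i none =
      Function.update T i₀ (some j₀) := by
    simp [T, Function.update_comm hne]
  have hmeet : kmeet (Function.update T i (some j)) (Function.update T i₀ (some j₀)) = T := by
    funext e
    by_cases he : e = i <;> by_cases he₀ : e = i₀ <;> simp_all [T, kmeet]
  have hjoin : kjoin (Function.update T i (some j)) (Function.update T i₀ (some j₀)) =
      Function.update (Function.update S i₀ (some j₀)) i (some j) := by
    funext e
    by_cases he : e = i <;> by_cases he₀ : e = i₀
    all_goals simp_all only [T, kjoin, ne_eq, not_false_eq_true, Function.update_idem,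
      Function.update_self, Function.update_of_ne]
    cases S e <;> simp
  have hsub := hf (Function.update T i (some j)) (Function.update T i₀ (some j₀))
  simp only [marginal, hA, hB]
  rw [hmeet, hjoin] at hsub
  linarith

theorem inP_of_le {x y z : Fin n → Fin k → ℝ} (hx : inP x) (hy : inP y) (hxz : x ≤ z)
    (hzy : z ≤ y) : inP z :=
  ⟨fun i j => ⟨(hx.1 i j).1.trans (hxz i j), (hzy i j).trans (hy.1 i j).2⟩,
    fun i => (Finset.sum_le_sum fun j _ => hzy i j).trans (hy.2 i)⟩

theorem le_of_forall_upd_le {x y : Fin n → Fin k → ℝ} (G : (Fin n → Fin k → ℝ) → ℝ)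
    (hxy : x ≤ y) (hG : ∀ z, x ≤ z → z ≤ y → ∀ i j, G (upd z i j (y i j)) ≤ G z) :
    G y ≤ G x := by
  classical
  let mix (A : Finset (Fin n × Fin k)) : Fin n → Fin k → ℝ :=
    fun i j => if (i, j) ∈ A then y i j else x i j
  have hx_le (A) : x ≤ mix A := fun i j => by
    by_cases h : (i, j) ∈ A <;> simp [mix, h, hxy i j]
  have hle_y (A) : mix A ≤ y := fun i j => by
    by_cases h : (i, j) ∈ A <;> simp [mix, h, hxy i j]
  have hmix (A : Finset (Fin n × Fin k)) : G (mix A) ≤ G x := by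
    induction A using Finset.induction_on with
    | empty => simp [mix]
    | @insert p A _ ih =>
      obtain ⟨i₀, j₀⟩ := p
      have hins : mix (insert (i₀, j₀) A) = upd (mix A) i₀ j₀ (y i₀ j₀) := by
        funext i j
        by_cases h : i = i₀ ∧ j = j₀
        · obtain ⟨rfl, rfl⟩ := h
          simp [mix, upd]
        · simp [mix, upd, h]
      rw [hins]
      exact (hG _ (hx_le A) (hle_y A) _ _).trans ih
  simpa [mix] using hmix Finset.univ

end MultilinearExtension

theorem mlext_gradient_antitone {n k : ℕ}
    (f : (Fin n → Option (Fin k)) → ℝ) (hf : KSubmodular f)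
    (x y : Fin n → Fin k → ℝ) (hx : inP x) (hy : inP y)
    (hxy : ∀ i j, x i j ≤ y i j) (i : Fin n) (j : Fin k) :
    pderivF f i j y ≤ pderivF f i j x := by
  rw [pderivF_eq_mlext_marginal, pderivF_eq_mlext_marginal]
  exact le_of_forall_upd_le _ hxy fun z hxz hzy i₀ j₀ =>
    mlext_upd_le (hf.marginal_marginal_nonpos i i₀ j j₀) (inP_of_le hx hy hxz hzy) (hzy i₀ j₀)
end

section
/- For any p ∈ [0,1] and η ∈ [−1,1], p·e^{η(1−p)} + (1−p)·e^{−ηp} ≤ e^{η²p(1−p)}. -/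
lemma exp_le_one_add_add_sq {x : ℝ} (hx : |x| ≤ 1) :
    Real.exp x ≤ 1 + x + x ^ 2 := by
  have h := Real.exp_bound hx (by norm_num : 0 < 3)
  have hsum : (∑ i ∈ Finset.range 3, x ^ i / (Nat.factorial i : ℝ))
      = 1 + x + x ^ 2 / 2 := by
    simp [Finset.sum_range_succ, Nat.factorial]
  rw [hsum] at h
  have habs : |x| ^ 3 ≤ x ^ 2 := by
    have h1 : |x| ^ 3 ≤ |x| ^ 2 :=
      pow_le_pow_of_le_one (abs_nonneg x) hx (by norm_num)
    simpa [sq_abs] using h1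
  have h2 := (abs_le.1 h).2
  norm_num [Nat.factorial] at h2
  nlinarith [h2, habs, sq_nonneg x]

theorem two_point_exponential_bound (p η : ℝ)
    (hp : p ∈ Set.Icc (0:ℝ) 1) (hη : η ∈ Set.Icc (-1:ℝ) 1) :
    p * Real.exp (η * (1 - p)) + (1 - p) * Real.exp (-(η * p)) ≤
      Real.exp (η ^ 2 * p * (1 - p)) := by
  obtain ⟨hp0, hp1⟩ := hp
  obtain ⟨hη0, hη1⟩ := hη
  have hηabs : |η| ≤ 1 := abs_le.2 ⟨hη0, hη1⟩
  have ha : |η * (1 - p)| ≤ 1 := by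
    rw [abs_mul]
    have : |1 - p| ≤ 1 := abs_le.2 ⟨by linarith, by linarith⟩
    calc |η| * |1 - p| ≤ 1 * 1 := by
          exact mul_le_mul hηabs this (abs_nonneg _) zero_le_one
      _ = 1 := by norm_num
  have hb : |-(η * p)| ≤ 1 := by
    rw [abs_neg, abs_mul]
    have : |p| ≤ 1 := abs_le.2 ⟨by linarith, by linarith⟩
    calc |η| * |p| ≤ 1 * 1 := by
          exact mul_le_mul hηabs this (abs_nonneg _) zero_le_one
      _ = 1 := by norm_num
  have h1 := exp_le_one_add_add_sq ha
  have h2 := exp_le_one_add_add_sq hb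
  have h3 := Real.add_one_le_exp (η ^ 2 * p * (1 - p))
  have h4 : p * Real.exp (η * (1 - p)) ≤ p * (1 + η * (1 - p) + (η * (1 - p)) ^ 2) :=
    mul_le_mul_of_nonneg_left h1 hp0
  have h5 : (1 - p) * Real.exp (-(η * p)) ≤ (1 - p) * (1 + -(η * p) + (-(η * p)) ^ 2) :=
    mul_le_mul_of_nonneg_left h2 (by linarith)
  nlinarith [h3, h4, h5]
end

section
/- Suppose a random variable X' takes value F(x) + β·F_{a}(x) − β·F_{b}(x + β e_a) with probability p = γ/(β+γ) and value F(x) − γ·F_a(x) + γ·F_b(x − γ e_a) with probability 1−p, where F is the multilinear extension of a monotone k-submodular function with marginal values in [0,1], a = (i₁,j₁), b = (i₂,j₂) are distinct coordinates with i₁ ≠ i₂, and F_a, F_b denote partial derivatives. Then for any λ ∈ [0,1], E[e^{λ(F(x)−X')}] ≤ e^{λ²βγ(F_b(x)−F_a(x))²}. -/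
open Finset

namespace SwapAux

variable {n k : ℕ}

/-- weight of value `v` in row `i`. -/
noncomputable def wt (x : Fin n → Fin k → ℝ) (i : Fin n) (v : Option (Fin k)) : ℝ :=
  v.elim (1 - ∑ j, x i j) (fun j => x i j)

/-- derivative coefficient of the row-`i` weight w.r.t. coordinate `(i,j)`. -/
def bco (j : Fin k) (v : Option (Fin k)) : ℝ :=
  v.elim (-1) (fun j' => if j' = j then 1 else 0)

lemma mlext_eq_wt (f : (Fin n → Option (Fin k)) → ℝ) (x : Fin n → Fin k → ℝ) :
    mlext f x = ∑ S, f S * ∏ i, wt x i (S i) := rfl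

lemma wt_upd_other (x : Fin n → Fin k → ℝ) (i : Fin n) (j : Fin k) (t : ℝ)
    {i' : Fin n} (h : i' ≠ i) (v : Option (Fin k)) :
    wt (upd x i j t) i' v = wt x i' v := by
  cases v <;> simp [wt, upd, h]

lemma wt_upd_self (x : Fin n → Fin k → ℝ) (i : Fin n) (j : Fin k) (t : ℝ)
    (v : Option (Fin k)) :
    wt (upd x i j t) i v = wt x i v + bco j v * (t - x i j) := by
  have hsum : ∑ j', upd x i j t i j' = (∑ j', x i j') + (t - x i j) := by
    have h1 : ∀ j' : Fin k, upd x i j t i j'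
        = x i j' + (if j' = j then t - x i j else 0) := by
      intro j'
      by_cases h : j' = j
      · subst h; simp [upd]
      · simp [upd, h]
    simp_rw [h1, Finset.sum_add_distrib]
    rw [Finset.sum_ite_eq' univ j (fun _ => t - x i j)]
    simp
  cases v with
  | none => simp [wt, bco, hsum]; ring
  | some j' =>
      by_cases h : j' = j
      · subst h; simp [wt, bco, upd]
      · simp [wt, bco, upd, h]

/-- generic reindexing: sum over `S i = some j` vs `S i = none`. -/
lemma sum_some_eq_sum_none (i : Fin n) (j : Fin k)
    (p : (Fin n → Option (Fin k)) → Prop) [DecidablePred p]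
    (hp : ∀ S v, p (Function.update S i v) ↔ p S)
    (H : (Fin n → Option (Fin k)) → ℝ) :
    ∑ S ∈ univ.filter (fun S => p S ∧ S i = some j), H S
      = ∑ S ∈ univ.filter (fun S => p S ∧ S i = none), H (Function.update S i (some j)) := by
  apply Finset.sum_nbij' (fun S => Function.update S i none)
    (fun S => Function.update S i (some j))
  · intro S hS
    simp only [mem_filter, mem_univ, true_and] at hS ⊢
    exact ⟨(hp S none).mpr hS.1, Function.update_self _ _ _⟩
  · intro S hS
    simp only [mem_filter, mem_univ, true_and] at hS ⊢
    exact ⟨(hp S (some j)).mpr hS.1, Function.update_self _ _ _⟩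
  · intro S hS
    simp only [mem_filter, mem_univ, true_and] at hS
    rw [Function.update_idem, ← hS.2, Function.update_eq_self]
  · intro S hS
    simp only [mem_filter, mem_univ, true_and] at hS
    rw [Function.update_idem, ← hS.2, Function.update_eq_self]
  · intro S hS
    simp only [mem_filter, mem_univ, true_and] at hS
    rw [Function.update_idem, ← hS.2, Function.update_eq_self]

/-- split a sum against the `bco` coefficient. -/
lemma sum_bco (i : Fin n) (j : Fin k)
    (p : (Fin n → Option (Fin k)) → Prop) [DecidablePred p]
    (G : (Fin n → Option (Fin k)) → ℝ) :
    ∑ S ∈ univ.filter p, G S * bco j (S i)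
      = (∑ S ∈ univ.filter (fun S => p S ∧ S i = some j), G S)
        - ∑ S ∈ univ.filter (fun S => p S ∧ S i = none), G S := by
  rw [Finset.sum_filter, Finset.sum_filter, Finset.sum_filter, ← Finset.sum_sub_distrib]
  apply Finset.sum_congr rfl
  intro S _
  rcases hS : S i with _ | j'
  · by_cases hpS : p S <;> simp [bco, hS, hpS]
  · by_cases hpS : p S
    · by_cases h : j' = j <;> simp [bco, hS, hpS, h]
    · simp [bco, hS, hpS]

/-- the multilinear extension is affine in coordinate `(i,j)`, with explicit slope. -/
lemma mlext_upd (f : (Fin n → Option (Fin k)) → ℝ) (x : Fin n → Fin k → ℝ)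
    (i : Fin n) (j : Fin k) (t : ℝ) :
    mlext f (upd x i j t) = mlext f x
      + (t - x i j) * ∑ S, (f S * ∏ i' ∈ univ.erase i, wt x i' (S i')) * bco j (S i) := by
  rw [mlext_eq_wt, mlext_eq_wt, Finset.mul_sum, ← Finset.sum_add_distrib]
  apply Finset.sum_congr rfl
  intro S _
  have h1 : ∏ i', wt (upd x i j t) i' (S i')
      = wt (upd x i j t) i (S i) * ∏ i' ∈ univ.erase i, wt (upd x i j t) i' (S i') :=
    (Finset.mul_prod_erase univ _ (mem_univ i)).symm
  have h2 : ∏ i', wt x i' (S i')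
      = wt x i (S i) * ∏ i' ∈ univ.erase i, wt x i' (S i') :=
    (Finset.mul_prod_erase univ _ (mem_univ i)).symm
  have h3 : ∏ i' ∈ univ.erase i, wt (upd x i j t) i' (S i')
      = ∏ i' ∈ univ.erase i, wt x i' (S i') := by
    apply Finset.prod_congr rfl
    intro i' hi'
    exact wt_upd_other x i j t (Finset.ne_of_mem_erase hi') _
  rw [h1, h2, h3, wt_upd_self]
  ring

/-- explicit formula for the partial derivative. -/
lemma pderivF_eq_slope (f : (Fin n → Option (Fin k)) → ℝ) (x : Fin n → Fin k → ℝ)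
    (i : Fin n) (j : Fin k) :
    pderivF f i j x
      = ∑ S, (f S * ∏ i' ∈ univ.erase i, wt x i' (S i')) * bco j (S i) := by
  unfold pderivF
  set s := ∑ S, (f S * ∏ i' ∈ univ.erase i, wt x i' (S i')) * bco j (S i) with hs
  have hfun : (fun t => mlext f (upd x i j t)) = fun t => mlext f x + (t - x i j) * s := by
    funext t; exact mlext_upd f x i j t
  rw [hfun]
  have hd : HasDerivAt (fun t : ℝ => mlext f x + (t - x i j) * s) s (x i j) := by
    have h1 : HasDerivAt (fun t : ℝ => t - x i j) 1 (x i j) :=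
      (hasDerivAt_id _).sub_const _
    simpa using (h1.mul_const s).const_add (mlext f x)
  exact hd.deriv

/-- canonical formula: sum over sets with `S i = none` of marginal gains times weights. -/
lemma pderivF_eq_marg (f : (Fin n → Option (Fin k)) → ℝ) (x : Fin n → Fin k → ℝ)
    (i : Fin n) (j : Fin k) :
    pderivF f i j x
      = ∑ S ∈ univ.filter (fun S : Fin n → Option (Fin k) => S i = none),
          (f (Function.update S i (some j)) - f S) * ∏ i' ∈ univ.erase i, wt x i' (S i') := by
  rw [pderivF_eq_slope]
  have huniv : (univ : Finset (Fin n → Option (Fin k)))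
      = univ.filter (fun S => True) := by simp
  rw [huniv, sum_bco i j (fun _ => True)]
  rw [sum_some_eq_sum_none i j (fun _ => True) (by simp)
    (fun S => f S * ∏ i' ∈ univ.erase i, wt x i' (S i'))]
  rw [← Finset.sum_sub_distrib]
  apply Finset.sum_congr (by simp) -- filter (True ∧ S i = none) = filter (S i = none)? handle below
  intro S hS
  have hw : ∏ i' ∈ univ.erase i, wt x i' (Function.update S i (some j) i')
      = ∏ i' ∈ univ.erase i, wt x i' (S i') := by
    apply Finset.prod_congr rfl
    intro i' hi'
    rw [Function.update_of_ne (Finset.ne_of_mem_erase hi')]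
  rw [hw]; ring

lemma wt_nonneg {x : Fin n → Fin k → ℝ} (hx : inP x) (i : Fin n) (v : Option (Fin k)) :
    0 ≤ wt x i v := by
  cases v with
  | none => simp [wt]; linarith [hx.2 i]
  | some j => exact (hx.1 i j).1

lemma wrest_nonneg {x : Fin n → Fin k → ℝ} (hx : inP x) (i : Fin n)
    (S : Fin n → Option (Fin k)) :
    0 ≤ ∏ i' ∈ univ.erase i, wt x i' (S i') :=
  Finset.prod_nonneg fun i' _ => wt_nonneg hx i' _

lemma sum_wrest (x : Fin n → Fin k → ℝ) (i : Fin n) :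
    ∑ S ∈ univ.filter (fun S : Fin n → Option (Fin k) => S i = none),
      ∏ i' ∈ univ.erase i, wt x i' (S i') = 1 := by
  classical
  set t : Fin n → Finset (Option (Fin k)) := fun i' => if i' = i then {none} else univ with ht
  have hfil : univ.filter (fun S : Fin n → Option (Fin k) => S i = none)
      = Fintype.piFinset t := by
    ext S
    simp only [mem_filter, mem_univ, true_and, Fintype.mem_piFinset, ht]
    constructor
    · intro h i'
      by_cases hii : i' = i
      · subst hii; simp [h]
      · simp [hii]
    · intro h
      have := h i
      simpa using this
  have hprod : ∀ S ∈ Fintype.piFinset t,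
      (∏ i' ∈ univ.erase i, wt x i' (S i'))
        = ∏ i', (if i' = i then (1:ℝ) else wt x i' (S i')) := by
    intro S _
    rw [← Finset.mul_prod_erase univ
      (fun i' => if i' = i then (1:ℝ) else wt x i' (S i')) (mem_univ i)]
    rw [if_pos rfl, one_mul]
    exact Finset.prod_congr rfl fun i' hi' => (if_neg (Finset.ne_of_mem_erase hi')).symm
  have key := Finset.prod_univ_sum t
    (fun i' (v : Option (Fin k)) => if i' = i then (1:ℝ) else wt x i' v)
  rw [hfil, Finset.sum_congr rfl hprod, ← key]
  rw [Finset.prod_eq_one]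
  intro i' _
  by_cases hii : i' = i
  · subst hii; simp [ht]
  · simp only [ht, if_neg hii]
    rw [Fintype.sum_option]
    simp [wt]

lemma pderivF_nonneg (f : (Fin n → Option (Fin k)) → ℝ)
    (hmono : ∀ (S : Fin n → Option (Fin k)) (e : Fin n) (j : Fin k),
      S e = none → f S ≤ f (Function.update S e (some j)))
    {x : Fin n → Fin k → ℝ} (hx : inP x) (i : Fin n) (j : Fin k) :
    0 ≤ pderivF f i j x := by
  rw [pderivF_eq_marg]
  apply Finset.sum_nonneg
  intro S hS
  simp only [mem_filter, mem_univ, true_and] at hS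
  exact mul_nonneg (by linarith [hmono S i j hS]) (wrest_nonneg hx i S)

lemma pderivF_le_one (f : (Fin n → Option (Fin k)) → ℝ)
    (hmarg : ∀ (S : Fin n → Option (Fin k)) (e : Fin n) (j : Fin k),
      S e = none → f (Function.update S e (some j)) - f S ≤ 1)
    {x : Fin n → Fin k → ℝ} (hx : inP x) (i : Fin n) (j : Fin k) :
    pderivF f i j x ≤ 1 := by
  rw [pderivF_eq_marg]
  calc ∑ S ∈ univ.filter (fun S : Fin n → Option (Fin k) => S i = none),
        (f (Function.update S i (some j)) - f S) * ∏ i' ∈ univ.erase i, wt x i' (S i')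
      ≤ ∑ S ∈ univ.filter (fun S : Fin n → Option (Fin k) => S i = none),
          ∏ i' ∈ univ.erase i, wt x i' (S i') := by
        apply Finset.sum_le_sum
        intro S hS
        simp only [mem_filter, mem_univ, true_and] at hS
        nlinarith [wrest_nonneg hx i S, hmarg S i j hS]
    _ = 1 := sum_wrest x i

/-- the partial derivative in `(i₂,j₂)` is affine in the coordinate `(i₁,j₁)`. -/
lemma pderivF_upd (f : (Fin n → Option (Fin k)) → ℝ) (x : Fin n → Fin k → ℝ)
    {i₁ i₂ : Fin n} (hi : i₁ ≠ i₂) (j₁ j₂ : Fin k) (t : ℝ) :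
    pderivF f i₂ j₂ (upd x i₁ j₁ t) = pderivF f i₂ j₂ x + (t - x i₁ j₁) *
      ∑ S ∈ univ.filter (fun S : Fin n → Option (Fin k) => S i₂ = none),
        ((f (Function.update S i₂ (some j₂)) - f S)
          * ∏ i' ∈ (univ.erase i₂).erase i₁, wt x i' (S i')) * bco j₁ (S i₁) := by
  rw [pderivF_eq_marg f (upd x i₁ j₁ t), pderivF_eq_marg f x, Finset.mul_sum,
    ← Finset.sum_add_distrib]
  apply Finset.sum_congr rfl
  intro S hS
  have hi₁ : i₁ ∈ univ.erase i₂ := Finset.mem_erase.mpr ⟨hi, mem_univ i₁⟩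
  have h1 : ∏ i' ∈ univ.erase i₂, wt (upd x i₁ j₁ t) i' (S i')
      = wt (upd x i₁ j₁ t) i₁ (S i₁)
        * ∏ i' ∈ (univ.erase i₂).erase i₁, wt (upd x i₁ j₁ t) i' (S i') :=
    (Finset.mul_prod_erase _ _ hi₁).symm
  have h2 : ∏ i' ∈ univ.erase i₂, wt x i' (S i')
      = wt x i₁ (S i₁) * ∏ i' ∈ (univ.erase i₂).erase i₁, wt x i' (S i') :=
    (Finset.mul_prod_erase _ _ hi₁).symm
  have h3 : ∏ i' ∈ (univ.erase i₂).erase i₁, wt (upd x i₁ j₁ t) i' (S i')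
      = ∏ i' ∈ (univ.erase i₂).erase i₁, wt x i' (S i') := by
    apply Finset.prod_congr rfl
    intro i' hi'
    exact wt_upd_other x i₁ j₁ t (Finset.ne_of_mem_erase hi') _
  rw [h1, h2, h3, wt_upd_self]
  ring

/-- pairwise submodularity consequence. -/
lemma submod_pair {f : (Fin n → Option (Fin k)) → ℝ} (hf : KSubmodular f)
    {i₁ i₂ : Fin n} (hi : i₁ ≠ i₂) (j₁ j₂ : Fin k)
    {S : Fin n → Option (Fin k)} (h1 : S i₁ = none) (h2 : S i₂ = none) :
    f (Function.update (Function.update S i₁ (some j₁)) i₂ (some j₂)) + f S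
      ≤ f (Function.update S i₁ (some j₁)) + f (Function.update S i₂ (some j₂)) := by
  have key := hf (Function.update S i₁ (some j₁)) (Function.update S i₂ (some j₂))
  have hm : kmeet (Function.update S i₁ (some j₁)) (Function.update S i₂ (some j₂)) = S := by
    funext e
    simp only [kmeet, Function.update_apply]
    by_cases e1 : e = i₁
    · subst e1
      rw [if_neg hi] at *
      simp [h1]
    · by_cases e2 : e = i₂
      · subst e2
        simp [e1, h2]
      · simp [e1, e2]
  have hj : kjoin (Function.update S i₁ (some j₁)) (Function.update S i₂ (some j₂))
      = Function.update (Function.update S i₁ (some j₁)) i₂ (some j₂) := by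
    funext e
    simp only [kjoin, Function.update_apply]
    by_cases e1 : e = i₁
    · subst e1
      simp [h1, hi]
    · by_cases e2 : e = i₂
      · subst e2
        simp [e1, h2]
      · simp only [if_neg e1, if_neg e2]
        cases S e <;> simp
  rw [hm, hj] at key
  linarith

/-- the mixed slope is nonpositive. -/
lemma slope2_nonpos {f : (Fin n → Option (Fin k)) → ℝ} (hf : KSubmodular f)
    {x : Fin n → Fin k → ℝ} (hx : inP x)
    {i₁ i₂ : Fin n} (hi : i₁ ≠ i₂) (j₁ j₂ : Fin k) :
    ∑ S ∈ univ.filter (fun S : Fin n → Option (Fin k) => S i₂ = none),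
        ((f (Function.update S i₂ (some j₂)) - f S)
          * ∏ i' ∈ (univ.erase i₂).erase i₁, wt x i' (S i')) * bco j₁ (S i₁) ≤ 0 := by
  classical
  rw [sum_bco i₁ j₁ (fun S : Fin n → Option (Fin k) => S i₂ = none)]
  rw [sum_some_eq_sum_none i₁ j₁ (fun S : Fin n → Option (Fin k) => S i₂ = none)
    (fun S v => by simp [Function.update_of_ne (Ne.symm hi)])]
  rw [← Finset.sum_sub_distrib]
  apply Finset.sum_nonpos
  intro S hS
  simp only [mem_filter, mem_univ, true_and] at hS
  obtain ⟨h2, h1⟩ := hS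
  have hw : ∏ i' ∈ (univ.erase i₂).erase i₁, wt x i' (Function.update S i₁ (some j₁) i')
      = ∏ i' ∈ (univ.erase i₂).erase i₁, wt x i' (S i') := by
    apply Finset.prod_congr rfl
    intro i' hi'
    rw [Function.update_of_ne (Finset.ne_of_mem_erase hi')]
  rw [hw]
  have hsub := submod_pair hf hi j₁ j₂ h1 h2
  have hwn : 0 ≤ ∏ i' ∈ (univ.erase i₂).erase i₁, wt x i' (S i') :=
    Finset.prod_nonneg fun i' _ => wt_nonneg hx i' _
  nlinarith

lemma exp_le_one_add_sq {y : ℝ} (hy : |y| ≤ 1) : Real.exp y ≤ 1 + y + y ^ 2 := by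
  have h := Real.exp_bound hy (n := 2) (by norm_num)
  have h2 : ∑ m ∈ Finset.range 2, y ^ m / m.factorial = 1 + y := by
    simp [Finset.sum_range_succ]
  rw [h2] at h
  have h3 : |y| ^ 2 = y ^ 2 := sq_abs y
  rw [h3] at h
  norm_num [Nat.factorial] at h
  have h5 := abs_le.mp h
  nlinarith [sq_nonneg y]

lemma two_point {p η : ℝ} (hp0 : 0 ≤ p) (hp1 : p ≤ 1) (hη : |η| ≤ 1) :
    p * Real.exp (η * (1 - p)) + (1 - p) * Real.exp (-(η * p))
      ≤ Real.exp (η ^ 2 * p * (1 - p)) := by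
  have hη1 : |η * (1 - p)| ≤ 1 := by
    rw [abs_mul]
    calc |η| * |1 - p| ≤ 1 * 1 := by
          apply mul_le_mul hη ?_ (abs_nonneg _) zero_le_one
          rw [abs_le]; constructor <;> linarith
      _ = 1 := one_mul 1
  have hη2 : |-(η * p)| ≤ 1 := by
    rw [abs_neg, abs_mul]
    calc |η| * |p| ≤ 1 * 1 := by
          apply mul_le_mul hη ?_ (abs_nonneg _) zero_le_one
          rw [abs_le]; constructor <;> linarith
      _ = 1 := one_mul 1
  have e1 := exp_le_one_add_sq hη1
  have e2 := exp_le_one_add_sq hη2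
  have step : p * Real.exp (η * (1 - p)) + (1 - p) * Real.exp (-(η * p))
      ≤ 1 + η ^ 2 * p * (1 - p) := by
    have b1 : p * Real.exp (η * (1 - p))
        ≤ p * (1 + η * (1 - p) + (η * (1 - p)) ^ 2) :=
      mul_le_mul_of_nonneg_left e1 hp0
    have b2 : (1 - p) * Real.exp (-(η * p))
        ≤ (1 - p) * (1 + -(η * p) + (-(η * p)) ^ 2) :=
      mul_le_mul_of_nonneg_left e2 (by linarith)
    have key : p * (1 + η * (1 - p) + (η * (1 - p)) ^ 2)
        + (1 - p) * (1 + -(η * p) + (-(η * p)) ^ 2)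
        = 1 + η ^ 2 * p * (1 - p) * (p + (1 - p)) := by ring
    nlinarith [sq_nonneg η, mul_nonneg (mul_nonneg (sq_nonneg η) hp0) (by linarith : (0:ℝ) ≤ 1 - p)]
  calc p * Real.exp (η * (1 - p)) + (1 - p) * Real.exp (-(η * p))
      ≤ 1 + η ^ 2 * p * (1 - p) := step
    _ ≤ Real.exp (η ^ 2 * p * (1 - p)) := by
        have := Real.add_one_le_exp (η ^ 2 * p * (1 - p))
        linarith

lemma add_onehot_eq_upd (x : Fin n → Fin k → ℝ) (i₁ : Fin n) (j₁ : Fin k) (c : ℝ) :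
    (fun i j => x i j + c * onehot i₁ j₁ i j) = upd x i₁ j₁ (x i₁ j₁ + c) := by
  funext i j
  by_cases h : i = i₁ ∧ j = j₁
  · obtain ⟨h1, h2⟩ := h; subst h1; subst h2; simp [onehot, upd]
  · simp [onehot, upd, h]

lemma sub_onehot_eq_upd (x : Fin n → Fin k → ℝ) (i₁ : Fin n) (j₁ : Fin k) (c : ℝ) :
    (fun i j => x i j - c * onehot i₁ j₁ i j) = upd x i₁ j₁ (x i₁ j₁ - c) := by
  funext i j
  by_cases h : i = i₁ ∧ j = j₁
  · obtain ⟨h1, h2⟩ := h; subst h1; subst h2; simp [onehot, upd]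
  · simp [onehot, upd, h]

end SwapAux

theorem swap_rounding_step_exponential_moment {n k : ℕ}
    (f : (Fin n → Option (Fin k)) → ℝ) (hf : KSubmodular f)
    (hmono : ∀ (S : Fin n → Option (Fin k)) (e : Fin n) (j : Fin k),
      S e = none → f S ≤ f (Function.update S e (some j)))
    (hmarg : ∀ (S : Fin n → Option (Fin k)) (e : Fin n) (j : Fin k),
      S e = none → f (Function.update S e (some j)) - f S ≤ 1)
    (i₁ i₂ : Fin n) (hi : i₁ ≠ i₂) (j₁ j₂ : Fin k)
    (β γ lam : ℝ) (hβ : 0 ≤ β) (hγ : 0 ≤ γ) (hβγ : 0 < β + γ) (hβγ1 : β + γ ≤ 1)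
    (hlam : lam ∈ Set.Icc (0:ℝ) 1)
    (x : Fin n → Fin k → ℝ) (hx : inP x)
    (hxp : inP (fun i j => x i j + β * onehot i₁ j₁ i j))
    (hxm : inP (fun i j => x i j - γ * onehot i₁ j₁ i j)) :
    (γ / (β + γ)) *
        Real.exp (lam * (mlext f x -
          (mlext f x + β * pderivF f i₁ j₁ x -
            β * pderivF f i₂ j₂ (fun i j => x i j + β * onehot i₁ j₁ i j)))) +
      (1 - γ / (β + γ)) *
        Real.exp (lam * (mlext f x -
          (mlext f x - γ * pderivF f i₁ j₁ x +
            γ * pderivF f i₂ j₂ (fun i j => x i j - γ * onehot i₁ j₁ i j)))) ≤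
      Real.exp (lam ^ 2 * β * γ * (pderivF f i₂ j₂ x - pderivF f i₁ j₁ x) ^ 2) := by
  classical
  obtain ⟨hlam0, hlam1⟩ := hlam
  have hβγ' : (β + γ) ≠ 0 := ne_of_gt hβγ
  set A := pderivF f i₁ j₁ x with hA
  set B := pderivF f i₂ j₂ x with hB
  have hA0 : 0 ≤ A := SwapAux.pderivF_nonneg f hmono hx i₁ j₁
  have hA1 : A ≤ 1 := SwapAux.pderivF_le_one f hmarg hx i₁ j₁
  have hB0 : 0 ≤ B := SwapAux.pderivF_nonneg f hmono hx i₂ j₂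
  have hB1 : B ≤ 1 := SwapAux.pderivF_le_one f hmarg hx i₂ j₂
  set s₂ := ∑ S ∈ univ.filter (fun S : Fin n → Option (Fin k) => S i₂ = none),
      ((f (Function.update S i₂ (some j₂)) - f S)
        * ∏ i' ∈ (univ.erase i₂).erase i₁, SwapAux.wt x i' (S i')) * SwapAux.bco j₁ (S i₁)
    with hs₂def
  have hs₂ : s₂ ≤ 0 := SwapAux.slope2_nonpos hf hx hi j₁ j₂
  have hBp : pderivF f i₂ j₂ (fun i j => x i j + β * onehot i₁ j₁ i j) = B + β * s₂ := by
    rw [SwapAux.add_onehot_eq_upd, SwapAux.pderivF_upd f x hi j₁ j₂, ← hs₂def, ← hB]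
    ring
  have hBm : pderivF f i₂ j₂ (fun i j => x i j - γ * onehot i₁ j₁ i j) = B - γ * s₂ := by
    rw [SwapAux.sub_onehot_eq_upd, SwapAux.pderivF_upd f x hi j₁ j₂, ← hs₂def, ← hB]
    ring
  rw [hBp, hBm]
  set p := γ / (β + γ) with hpdef
  set η := lam * (β + γ) * (B - A) with hηdef
  have hp0 : 0 ≤ p := div_nonneg hγ hβγ.le
  have hp1 : p ≤ 1 := by
    rw [hpdef, div_le_one hβγ]; linarith
  have hηabs : |η| ≤ 1 := by
    have h1 : |η| = lam * (β + γ) * |B - A| := by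
      rw [hηdef, abs_mul, abs_mul, abs_of_nonneg hlam0, abs_of_nonneg hβγ.le]
    have h2 : |B - A| ≤ 1 := abs_le.mpr ⟨by linarith, by linarith⟩
    rw [h1]
    calc lam * (β + γ) * |B - A| ≤ 1 * 1 * 1 := by
          gcongr <;> first | exact abs_nonneg _ | linarith
      _ = 1 := by norm_num
  have e1 : lam * (mlext f x - (mlext f x + β * A - β * (B + β * s₂)))
      = lam * β * ((B + β * s₂) - A) := by ring
  have e2 : lam * (mlext f x - (mlext f x - γ * A + γ * (B - γ * s₂)))
      = lam * γ * (A - (B - γ * s₂)) := by ring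
  rw [e1, e2]
  have hlb : 0 ≤ lam * β := mul_nonneg hlam0 hβ
  have hlg : 0 ≤ lam * γ := mul_nonneg hlam0 hγ
  have m1 : Real.exp (lam * β * ((B + β * s₂) - A)) ≤ Real.exp (η * (1 - p)) := by
    apply Real.exp_le_exp.mpr
    have : η * (1 - p) = lam * β * (B - A) := by
      rw [hηdef, hpdef]; field_simp; ring
    rw [this]
    nlinarith [mul_nonneg (mul_nonneg hlam0 hβ) hβ, hs₂]
  have m2 : Real.exp (lam * γ * (A - (B - γ * s₂))) ≤ Real.exp (-(η * p)) := by
    apply Real.exp_le_exp.mpr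
    have : -(η * p) = lam * γ * (A - B) := by
      rw [hηdef, hpdef]; field_simp; ring
    rw [this]
    nlinarith [mul_nonneg (mul_nonneg hlam0 hγ) hγ, hs₂]
  have hfin : η ^ 2 * p * (1 - p) = lam ^ 2 * β * γ * (B - A) ^ 2 := by
    rw [hηdef, hpdef]; field_simp; ring
  calc p * Real.exp (lam * β * ((B + β * s₂) - A))
        + (1 - p) * Real.exp (lam * γ * (A - (B - γ * s₂)))
      ≤ p * Real.exp (η * (1 - p)) + (1 - p) * Real.exp (-(η * p)) := by
        apply add_le_add
        · exact mul_le_mul_of_nonneg_left m1 hp0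
        · exact mul_le_mul_of_nonneg_left m2 (by linarith)
    _ ≤ Real.exp (η ^ 2 * p * (1 - p)) := SwapAux.two_point hp0 hp1 hηabs
    _ = Real.exp (lam ^ 2 * β * γ * (B - A) ^ 2) := by rw [hfin]
end
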